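/- arXiv:2502.00786 — 3 statements merged into one kernel-verified Lean document; each statement's English description precedes it below -/
import Mathlib

section
/- Let α ∈ ℝ and x ∈ [−π/2, π/2]. Then: (1) if α ≤ 0, then |1 − cos x − α| ≥ x²/4; (2) if 0 < α < 1 and β = arccos(1−α) ∈ (0, π/2), then |1 − cos x − α| ≥ (1/4)|x−β|·|x+β|; (3) if α ≥ 1, then |1 − cos x − α| ≥ (1/4)|x−π/2|·|x+π/2|. -/
open scoped Real BigOperators ENNReal NNReal
open MeasureTheory

noncomputable section

namespace FPU

/-- `e^{ix}`. -/
def eI (x : ℝ) : ℂ := Complex.exp (Complex.I * x)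

/-- Mesh size `h = π / N`. -/
def msh (N : ℕ) : ℝ := Real.pi / N

/-- Frequency/index set `{-N, …, N-1}` of `𝕋_h` (identified with `(𝕋_h)*`). -/
def dual (N : ℕ) : Finset ℤ := Finset.Icc (-(N : ℤ)) ((N : ℤ) - 1)

/-- Reduction of an integer into `{-N, …, N-1}` modulo `2N`. -/
def red (N : ℕ) (m : ℤ) : ℤ := (m + N) % (2 * N) - N

/-- Complexification of a real lattice function. -/
def cf (f : ℤ → ℝ) : ℤ → ℂ := fun n => (f n : ℂ)

/-- Discrete Fourier coefficient `𝓕_h f (k)` on `𝕋_h`. -/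
def dF (N : ℕ) (f : ℤ → ℂ) (k : ℤ) : ℂ :=
  ((msh N / Real.sqrt (2 * Real.pi) : ℝ) : ℂ) *
    ∑ n ∈ dual N, f n * eI (-(msh N * n * k))

/-- `L²(𝕋_h)` norm. -/
def L2h (N : ℕ) (f : ℤ → ℂ) : ℝ :=
  Real.sqrt (msh N * ∑ n ∈ dual N, ‖f n‖ ^ 2)

/-- `H^s(𝕋_h)` norm. -/
def Hs (N : ℕ) (s : ℝ) (f : ℤ → ℂ) : ℝ :=
  Real.sqrt (∑ k ∈ dual N, (1 + (k : ℝ) ^ 2) ^ s * ‖dF N f k‖ ^ 2)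

/-- `ℍ^s(𝕋_h)` norm of a pair. -/
def HsPair (N : ℕ) (s : ℝ) (f g : ℤ → ℂ) : ℝ :=
  Real.sqrt (Hs N s f ^ 2 + Hs N s g ^ 2)

/-- Fourier multiplier on `𝕋_h` with symbol `m`. -/
def mult (N : ℕ) (m : ℤ → ℂ) (f : ℤ → ℂ) : ℤ → ℂ := fun n =>
  ((1 / Real.sqrt (2 * Real.pi) : ℝ) : ℂ) *
    ∑ k ∈ dual N, m k * dF N f k * eI (msh N * n * k)

/-- Symbol of `∇_h`. -/
def gradSymb (N : ℕ) (k : ℤ) : ℂ :=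
  2 * Complex.I / ((msh N : ℝ) : ℂ) * ((Real.sin (msh N * k / 2) : ℝ) : ℂ)

/-- `∇_h`. -/
def gradh (N : ℕ) : (ℤ → ℂ) → ℤ → ℂ := mult N (gradSymb N)

/-- `∇_h⁻¹` (vanishing at frequency `0`). -/
def gradhInv (N : ℕ) : (ℤ → ℂ) → ℤ → ℂ :=
  mult N fun k => if k = 0 then 0 else (gradSymb N k)⁻¹

/-- The FPU dispersion `s_h(k) = (1/h²)(k - (2/h)sin(hk/2))`. -/
def sh (N : ℕ) (k : ℤ) : ℝ :=
  (1 / msh N ^ 2) * (k - (2 / msh N) * Real.sin (msh N * k / 2))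

/-- Linear FPU propagator `S_h^σ(t)`, the multiplier with symbol `e^{iσt·s_h(k)}`. -/
def Sh (N : ℕ) (σ t : ℝ) : (ℤ → ℂ) → ℤ → ℂ :=
  mult N fun k => eI (σ * t * sh N k)

/-- `e^{σc∂_h}`, the multiplier with symbol `e^{iσck}`. -/
def expDh (N : ℕ) (c : ℝ) : (ℤ → ℂ) → ℤ → ℂ :=
  mult N fun k => eI (c * k)

/-- Coupled FPU integral equation (component with sign `σ`, the other component is `w`). -/
def coupledEq (N : ℕ) (σ T : ℝ) (u0 : ℤ → ℂ) (u w : ℝ → ℤ → ℂ) : Prop :=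
  ∀ t ∈ Set.Icc (-T) T, ∀ n : ℤ,
    u t n = Sh N σ t u0 n - (σ : ℂ) / 4 *
      ∫ t' in (0:ℝ)..t,
        Sh N σ (t - t')
          (gradh N (fun m =>
            (u t' m + expDh N (σ * (2 * t' / msh N ^ 2)) (w t') m) ^ 2)) n

/-- Decoupled FPU integral equation with sign `σ`. -/
def decoupledEq (N : ℕ) (σ T : ℝ) (u0 : ℤ → ℂ) (v : ℝ → ℤ → ℂ) : Prop :=
  ∀ t ∈ Set.Icc (-T) T, ∀ n : ℤ,
    v t n = Sh N σ t u0 n - (σ : ℂ) / 4 *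
      ∫ t' in (0:ℝ)..t, Sh N σ (t - t') (gradh N (fun m => (v t' m) ^ 2)) n

/-- Fourier coefficient on `𝕋 = ℝ/2πℤ`. -/
def tF (f : ℝ → ℂ) (k : ℤ) : ℂ :=
  ((1 / Real.sqrt (2 * Real.pi) : ℝ) : ℂ) *
    ∫ x in (-Real.pi)..Real.pi, f x * eI (-(x * k))

/-- Fourier multiplier on `𝕋`. -/
def tmult (m : ℤ → ℂ) (f : ℝ → ℂ) : ℝ → ℂ := fun x =>
  ((1 / Real.sqrt (2 * Real.pi) : ℝ) : ℂ) * ∑' k : ℤ, m k * tF f k * eI (x * k)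

/-- Airy propagator `S^σ(t)`, multiplier with symbol `e^{iσtk³/24}`. -/
def airy (σ t : ℝ) : (ℝ → ℂ) → ℝ → ℂ :=
  tmult fun k => eI (σ * t * (k : ℝ) ^ 3 / 24)

/-- `∂_x` as a Fourier multiplier on `𝕋`. -/
def tderiv : (ℝ → ℂ) → ℝ → ℂ := tmult fun k => Complex.I * (k : ℂ)

/-- `L²(𝕋)` norm (computed on the Fourier side). -/
def L2T (f : ℝ → ℂ) : ℝ≥0∞ :=
  (∑' k : ℤ, ENNReal.ofReal (‖tF f k‖ ^ 2)) ^ (1/2 : ℝ)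

/-- `H^s(𝕋)` norm. -/
def HsT (s : ℝ) (f : ℝ → ℂ) : ℝ≥0∞ :=
  (∑' k : ℤ, ENNReal.ofReal ((1 + (k : ℝ) ^ 2) ^ s * ‖tF f k‖ ^ 2)) ^ (1/2 : ℝ)

/-- `L²(𝕋)` norm of the sharp frequency projection onto the set `K`. -/
def L2Tproj (K : Set ℤ) (f : ℝ → ℂ) : ℝ≥0∞ :=
  (∑' k : ℤ, ENNReal.ofReal (K.indicator (fun j => ‖tF f j‖ ^ 2) k)) ^ (1/2 : ℝ)

/-- Linear interpolation `𝓛_h` of a lattice function, as a function on `𝕋` (2π-periodic). -/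
def interp (N : ℕ) (f : ℤ → ℂ) : ℝ → ℂ := fun x =>
  f (red N ⌊x / msh N⌋) +
    (f (red N (⌊x / msh N⌋ + 1)) - f (red N ⌊x / msh N⌋)) *
      (((x - msh N * ⌊x / msh N⌋) / msh N : ℝ) : ℂ)

/-- KdV integral equation with sign `σ`. -/
def kdvEq (σ T : ℝ) (w0 : ℝ → ℂ) (w : ℝ → ℝ → ℂ) : Prop :=
  ∀ t ∈ Set.Icc (-T) T, ∀ x : ℝ,
    w t x = airy σ t w0 x - (σ : ℂ) / 4 *
      ∫ t' in (0:ℝ)..t, airy σ (t - t') (tderiv (fun y => (w t' y) ^ 2)) x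

/-- Continuity in `H^s(𝕋)` on `[-T,T]`, together with membership in `H^s`. -/
def contHsT (s T : ℝ) (w : ℝ → ℝ → ℂ) : Prop :=
  ∀ t₀ ∈ Set.Icc (-T) T, HsT s (w t₀) < ⊤ ∧
    ∀ ε : ℝ, 0 < ε → ∃ δ : ℝ, 0 < δ ∧ ∀ t ∈ Set.Icc (-T) T,
      |t - t₀| < δ → HsT s (fun x => w t x - w t₀ x) < ENNReal.ofReal ε

/-- Japanese bracket `⟨x⟩`. -/
def jap (x : ℝ) : ℝ := Real.sqrt (1 + x ^ 2)

/-- Space-time Fourier transform on `ℝ × 𝕋_h`. -/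
def stF (N : ℕ) (u : ℝ → ℤ → ℂ) (τ : ℝ) (k : ℤ) : ℂ :=
  ((msh N / (2 * Real.pi) : ℝ) : ℂ) *
    ∑ n ∈ dual N, ∫ t : ℝ, eI (-(t * τ)) * eI (-(msh N * n * k)) * u t n

/-- Bourgain norm `X^{s,b}_{h,σ}` (with sign `σ = ±1`). -/
def Xnorm (N : ℕ) (σ s b : ℝ) (u : ℝ → ℤ → ℂ) : ℝ≥0∞ :=
  (∑ k ∈ dual N, ∫⁻ τ : ℝ, ENNReal.ofReal
      (jap (k : ℝ) ^ (2 * s) * jap (τ - σ * sh N k) ^ (2 * b) * ‖stF N u τ k‖ ^ 2)) ^ (1/2 : ℝ)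

/-- `Z^s_{h,σ}` norm. -/
def Znorm (N : ℕ) (σ s : ℝ) (u : ℝ → ℤ → ℂ) : ℝ≥0∞ :=
  Xnorm N σ s (-(1/2)) u +
    (∑ k ∈ dual N, (∫⁻ τ : ℝ, ENNReal.ofReal
        (jap (k : ℝ) ^ s * (jap (τ - σ * sh N k))⁻¹ * ‖stF N u τ k‖)) ^ 2) ^ (1/2 : ℝ)

/-- `Y^s_{h,σ}` norm. -/
def Ynorm (N : ℕ) (σ s : ℝ) (u : ℝ → ℤ → ℂ) : ℝ≥0∞ :=
  Xnorm N σ s (1/2) u +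
    (∑ k ∈ dual N, (∫⁻ τ : ℝ, ENNReal.ofReal
        (jap (k : ℝ) ^ s * ‖stF N u τ k‖)) ^ 2) ^ (1/2 : ℝ)

/-- Time restricted norm `Y^{s,T}_{h,σ}` (infimum over extensions). -/
def YnormT (N : ℕ) (σ s T : ℝ) (u : ℝ → ℤ → ℂ) : ℝ≥0∞ :=
  ⨅ g : {g : ℝ → ℤ → ℂ // ∀ t ∈ Set.Icc (-T) T, ∀ n : ℤ, g t n = u t n},
    Ynorm N σ s g.1

/-- `L⁴(ℝ × 𝕋_h)` norm. -/
def L4st (N : ℕ) (u : ℝ → ℤ → ℂ) : ℝ≥0∞ :=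
  (∫⁻ t : ℝ, ENNReal.ofReal (msh N * ∑ n ∈ dual N, ‖u t n‖ ^ 4)) ^ (1/4 : ℝ)

/-- KdV resonance `Ψ²(k,k₁,k₂) = -(1/8)kk₁k₂`. -/
def Psi2 (k k₁ k₂ : ℤ) : ℝ := -(1/8 : ℝ) * (k : ℝ) * (k₁ : ℝ) * (k₂ : ℝ)

/-- KdV cubic resonance `Ψ³ = -(1/8)(a+b)(b+c)(a+c)`. -/
def Psi3 (a b c : ℤ) : ℝ :=
  -(1/8 : ℝ) * (((a + b : ℤ) : ℝ) * ((b + c : ℤ) : ℝ) * ((a + c : ℤ) : ℝ))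

/-- KdV quartic resonance. -/
def Psi4 (k₁ k₂ k₃ k₄ : ℤ) : ℝ := Psi3 (k₁ + k₂) k₃ k₄ + Psi2 (k₁ + k₂) k₁ k₂

/-- FPU resonance `Φ_h²`. -/
def Phi2 (h : ℝ) (k k₁ k₂ : ℤ) : ℝ :=
  -(8 / h ^ 3) *
    (Real.sin (h * k₁ / 4) * Real.sin (h * k₂ / 4) * Real.sin (h * k / 4))

/-- FPU cubic resonance `Φ_h³`. -/
def Phi3 (h : ℝ) (a b c : ℤ) : ℝ :=
  -(8 / h ^ 3) *
    (Real.sin (h * (a + b) / 4) * Real.sin (h * (b + c) / 4) * Real.sin (h * (a + c) / 4))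

/-- FPU quartic resonance `Φ_h⁴`. -/
def Phi4 (h : ℝ) (k₁ k₂ k₃ k₄ : ℤ) : ℝ :=
  Phi3 h (k₁ + k₂) k₃ k₄ + Phi2 h (k₁ + k₂) k₁ k₂

/-- Decoupled FPU profile equation in Fourier variables (sign `σ`), on the time set `I`. -/
def fpuProfileEq (N : ℕ) (σ : ℝ) (u0 : ℤ → ℂ) (V : ℝ → ℤ → ℂ) (I : Set ℝ) : Prop :=
  ∀ t ∈ I, ∀ k ∈ dual N,
    dF N (V t) k = dF N u0 k -
      (σ : ℂ) * Complex.I / (2 * ((msh N : ℝ) : ℂ)) * ((Real.sin (msh N * k / 2) : ℝ) : ℂ) *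
        ∫ t' in (0:ℝ)..t,
          ∑ k₁ ∈ dual N,
            (if k₁ ≠ 0 ∧ k - k₁ ≠ 0 ∧ k - k₁ ∈ dual N then
              eI (σ * t' * Phi2 (msh N) k k₁ (k - k₁)) * dF N (V t') k₁ * dF N (V t') (k - k₁)
            else 0)

/-- KdV profile equation in Fourier variables (sign `σ`), on the time set `I`;
`W t k` denotes the `k`-th Fourier coefficient of the profile at time `t`. -/
def kdvProfileEq (σ : ℝ) (w0 : ℤ → ℂ) (W : ℝ → ℤ → ℂ) (I : Set ℝ) : Prop :=
  ∀ t ∈ I, ∀ k : ℤ,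
    W t k = w0 k -
      (σ : ℂ) * Complex.I * (k : ℂ) / 4 *
        ∫ t' in (0:ℝ)..t,
          ∑' k₁ : ℤ,
            (if k₁ ≠ 0 ∧ k - k₁ ≠ 0 then
              eI (σ * t' * Psi2 k k₁ (k - k₁)) * W t' k₁ * W t' (k - k₁)
            else 0)

/-- `H^s(𝕋)` norm of a Fourier coefficient sequence (extended-real valued). -/
def HsSeq (s : ℝ) (a : ℤ → ℂ) : ℝ≥0∞ :=
  (∑' k : ℤ, ENNReal.ofReal ((1 + (k : ℝ) ^ 2) ^ s * ‖a k‖ ^ 2)) ^ (1/2 : ℝ)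

/-- `H^s(𝕋)` norm of a Fourier coefficient sequence (real valued). -/
def HsSeqR (s : ℝ) (a : ℤ → ℂ) : ℝ :=
  Real.sqrt (∑' k : ℤ, (1 + (k : ℝ) ^ 2) ^ s * ‖a k‖ ^ 2)

/-- `ℓ²(ℤ)` norm of a Fourier coefficient sequence. -/
def l2R (a : ℤ → ℂ) : ℝ := Real.sqrt (∑' k : ℤ, ‖a k‖ ^ 2)

/-- `ℓ²` norm of the projection of a coefficient sequence to the frequency set `K`. -/
def l2projR (K : Set ℤ) (a : ℤ → ℂ) : ℝ :=
  Real.sqrt (∑' k : ℤ, K.indicator (fun j => ‖a j‖ ^ 2) k)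

/-- Periodic discrete Laplacian `Δ_h` on real lattice functions. -/
def lapR (N : ℕ) (f : ℤ → ℝ) (n : ℤ) : ℝ :=
  (f (red N (n + 1)) + f (red N (n - 1)) - 2 * f n) / msh N ^ 2

lemma half_le_sin_aux {x : ℝ} (h0 : 0 ≤ x) (h1 : x ≤ Real.pi / 2) :
    x / 2 ≤ Real.sin x := by
  have h := Real.mul_le_sin h0 h1
  have h2 : x / 2 ≤ 2 / Real.pi * x := by
    rw [div_mul_eq_mul_div, div_le_div_iff₀ two_pos Real.pi_pos]
    nlinarith [Real.pi_le_four]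
  linarith

lemma cos_anti_aux : AntitoneOn (fun x : ℝ => Real.cos x + x ^ 2 / 4)
    (Set.Icc 0 (Real.pi / 2)) := by
  apply antitoneOn_of_deriv_nonpos (convex_Icc _ _)
  · fun_prop
  · intro x _
    apply DifferentiableAt.differentiableWithinAt
    fun_prop
  · intro x hx
    rw [interior_Icc] at hx
    have hd : deriv (fun x : ℝ => Real.cos x + x ^ 2 / 4) x
        = -Real.sin x + 2 * x / 4 := by
      rw [deriv_fun_add (by fun_prop) (by fun_prop), Real.deriv_cos, deriv_div_const,
        deriv_pow_field]
      ring_nf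
    rw [hd]
    have := half_le_sin_aux hx.1.le hx.2.le
    linarith

/-- Key lemma: for `0 ≤ y ≤ z ≤ π/2`, `(z² - y²)/4 ≤ cos y - cos z`. -/
lemma cos_diff_aux {y z : ℝ} (hy : 0 ≤ y) (hyz : y ≤ z) (hz : z ≤ Real.pi / 2) :
    (z ^ 2 - y ^ 2) / 4 ≤ Real.cos y - Real.cos z := by
  have := cos_anti_aux (Set.mem_Icc.2 ⟨hy, hyz.trans hz⟩)
    (Set.mem_Icc.2 ⟨hy.trans hyz, hz⟩) hyz
  simp only at this
  linarith

/-- General form: for `x ∈ [-π/2, π/2]` and `β ∈ [0, π/2]`,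
`|x² - β²|/4 ≤ |cos β - cos x|`. -/
lemma cos_diff_abs_aux {x β : ℝ} (hx1 : -(Real.pi / 2) ≤ x) (hx2 : x ≤ Real.pi / 2)
    (hb1 : 0 ≤ β) (hb2 : β ≤ Real.pi / 2) :
    |x ^ 2 - β ^ 2| / 4 ≤ |Real.cos β - Real.cos x| := by
  have hax : |x| ≤ Real.pi / 2 := abs_le.2 ⟨by linarith, hx2⟩
  have hcx : Real.cos |x| = Real.cos x := by
    rcases abs_cases x with ⟨h, _⟩ | ⟨h, _⟩
    · rw [h]
    · rw [h, Real.cos_neg]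
  have hsq : |x| ^ 2 = x ^ 2 := sq_abs x
  rcases le_total β |x| with h | h
  · have key := cos_diff_aux hb1 h hax
    rw [hcx, hsq] at key
    have h1 : 0 ≤ x ^ 2 - β ^ 2 := by nlinarith [abs_nonneg x]
    rw [abs_of_nonneg h1]
    calc (x ^ 2 - β ^ 2) / 4 ≤ Real.cos β - Real.cos x := key
      _ ≤ |Real.cos β - Real.cos x| := le_abs_self _
  · have key := cos_diff_aux (abs_nonneg x) h hb2
    rw [hcx, hsq] at key
    have h1 : x ^ 2 - β ^ 2 ≤ 0 := by nlinarith [abs_nonneg x]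
    rw [abs_of_nonpos h1]
    calc -(x ^ 2 - β ^ 2) / 4 ≤ Real.cos x - Real.cos β := by linarith
      _ ≤ |Real.cos β - Real.cos x| := by
          rw [abs_sub_comm]; exact le_abs_self _

/-- lower bounds for `|1 - cos x - α|` on `[-π/2, π/2]`. -/
theorem cos_lower_bounds (α x : ℝ)
    (hx : x ∈ Set.Icc (-(Real.pi / 2)) (Real.pi / 2)) :
    (α ≤ 0 → x ^ 2 / 4 ≤ |1 - Real.cos x - α|) ∧
    (0 < α → α < 1 →
      (1/4) * |x - Real.arccos (1 - α)| * |x + Real.arccos (1 - α)|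
        ≤ |1 - Real.cos x - α|) ∧
    (1 ≤ α →
      (1/4) * |x - Real.pi / 2| * |x + Real.pi / 2| ≤ |1 - Real.cos x - α|) := by
  obtain ⟨hx1, hx2⟩ := hx
  refine ⟨?_, ?_, ?_⟩
  · -- α ≤ 0
    intro hα
    have key := cos_diff_abs_aux hx1 hx2 le_rfl (by positivity)
    rw [Real.cos_zero] at key
    have h1 : |1 - Real.cos x - α| = |1 - Real.cos x| + (-α) := by
      have hc : Real.cos x ≤ 1 := Real.cos_le_one x
      rw [abs_of_nonneg (by linarith), abs_of_nonneg (by linarith)]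
      ring
    have h2 : |x ^ 2 - 0 ^ 2| = x ^ 2 := by
      simp [abs_of_nonneg (sq_nonneg x)]
    rw [h2] at key
    rw [h1, abs_sub_comm] at *
    linarith [key]
  · -- 0 < α < 1
    intro hα0 hα1
    set β := Real.arccos (1 - α) with hβ
    have hb1 : 0 ≤ β := Real.arccos_nonneg _
    have hb2 : β ≤ Real.pi / 2 := Real.arccos_le_pi_div_two.2 (by linarith)
    have hcb : Real.cos β = 1 - α := Real.cos_arccos (by linarith) (by linarith)
    have key := cos_diff_abs_aux hx1 hx2 hb1 hb2
    rw [hcb] at key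
    have h1 : Real.cos β - Real.cos x = 1 - Real.cos x - α := by rw [hcb]; ring
    have h2 : |x - β| * |x + β| = |x ^ 2 - β ^ 2| := by
      rw [← abs_mul]; ring_nf
    have h3 : (1 - α) - Real.cos x = 1 - Real.cos x - α := by ring
    rw [h3] at key
    calc 1 / 4 * |x - β| * |x + β| = |x ^ 2 - β ^ 2| / 4 := by
          rw [mul_assoc, h2]; ring
      _ ≤ |1 - Real.cos x - α| := key
  · -- 1 ≤ α
    intro hα
    have key := cos_diff_abs_aux hx1 hx2
      (le_of_lt (by positivity : (0:ℝ) < Real.pi / 2)) le_rfl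
    rw [Real.cos_pi_div_two] at key
    have hc0 : 0 ≤ Real.cos x := Real.cos_nonneg_of_mem_Icc ⟨hx1, hx2⟩
    have h1 : |0 - Real.cos x| = Real.cos x := by
      rw [abs_sub_comm, sub_zero, abs_of_nonneg hc0]
    rw [h1] at key
    have h2 : |x - Real.pi / 2| * |x + Real.pi / 2|
        = |x ^ 2 - (Real.pi / 2) ^ 2| := by rw [← abs_mul]; ring_nf
    have h3 : |1 - Real.cos x - α| = α - 1 + Real.cos x := by
      rw [abs_of_nonpos (by linarith)]; ring
    calc 1 / 4 * |x - Real.pi / 2| * |x + Real.pi / 2|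
        = |x ^ 2 - (Real.pi / 2) ^ 2| / 4 := by rw [mul_assoc, h2]; ring
      _ ≤ Real.cos x := key
      _ ≤ |1 - Real.cos x - α| := by rw [h3]; linarith

end FPU

end
end

section
/- There is an absolute constant C such that for every t ∈ ℝ, every M > 0, and all f₁, f₂, f₃, f₄ ∈ L²(𝕋): (1) ‖P_{≤M} D₁^±(f₁,f₂)‖_{L²(𝕋)} ≤ C·M^{3/2}·‖f₁‖_{L²(𝕋)}‖f₂‖_{L²(𝕋)}; (2) ‖P_{≥M} D₂^±(f₁,f₂)‖_{L²(𝕋)} ≤ C·M^{−1}·‖f₁‖_{L²(𝕋)}‖f₂‖_{L²(𝕋)}; (3) ‖P_{≥M} D₃^±(f₁,f₂,f₃)‖_{L²(𝕋)} ≤ C·M^{−1/2}·‖f₁‖_{L²(𝕋)}‖f₂‖_{L²(𝕋)}‖f₃‖_{L²(𝕋)}; (4) ‖P_{≥M} D₄^±(f₁,f₂,f₃,f₄)‖_{L²(𝕋)} ≤ C·‖f₁‖_{L²(𝕋)}‖f₂‖_{L²(𝕋)}‖f₃‖_{L²(𝕋)}‖f₄‖_{L²(𝕋)}. -/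
open scoped Real BigOperators ENNReal NNReal
open MeasureTheory

noncomputable section

namespace FPU

/-- Fourier coefficients of `D₁^σ(f₁,f₂)` at time `t` (inputs are coefficient sequences). -/
def D1c (σ t : ℝ) (a b : ℤ → ℂ) (k : ℤ) : ℂ :=
  -(σ : ℂ) * Complex.I * (k : ℂ) / 4 *
    ∑' k₁ : ℤ, (if k₁ ≠ 0 ∧ k - k₁ ≠ 0 then
      eI (σ * t * Psi2 k k₁ (k - k₁)) * a k₁ * b (k - k₁) else 0)

/-- Fourier coefficients of `D₂^σ(f₁,f₂)` at time `t`. -/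
def D2c (σ t : ℝ) (a b : ℤ → ℂ) (k : ℤ) : ℂ :=
  ∑' k₁ : ℤ, (if k₁ ≠ 0 ∧ k - k₁ ≠ 0 then
    (((k : ℝ) / Psi2 k k₁ (k - k₁) : ℝ) : ℂ) *
      eI (σ * t * Psi2 k k₁ (k - k₁)) * a k₁ * b (k - k₁) else 0)

/-- Fourier coefficients of `D₃^σ(f₁,f₂,f₃)` at time `t`. -/
def D3c (σ t : ℝ) (a b c : ℤ → ℂ) (k : ℤ) : ℂ :=
  ∑' p : ℤ × ℤ,
    (if p.1 ≠ 0 ∧ p.2 ≠ 0 ∧ k - p.1 - p.2 ≠ 0 ∧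
        p.1 + p.2 ≠ 0 ∧ p.2 + (k - p.1 - p.2) ≠ 0 ∧ p.1 + (k - p.1 - p.2) ≠ 0 then
      ((2 / ((p.1 : ℝ) * Psi3 p.1 p.2 (k - p.1 - p.2)) : ℝ) : ℂ) *
        eI (σ * t * Psi3 p.1 p.2 (k - p.1 - p.2)) *
        a p.1 * b p.2 * c (k - p.1 - p.2)
    else 0)

/-- Fourier coefficients of `D₄^σ(f₁,f₂,f₃,f₄)` at time `t`. -/
def D4c (σ t : ℝ) (a b c d : ℤ → ℂ) (k : ℤ) : ℂ :=
  ∑' p : ℤ × ℤ × ℤ,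
    (if p.1 * p.2.1 * p.2.2 * (k - p.1 - p.2.1 - p.2.2) ≠ 0 ∧
        (p.1 + p.2.1) * (p.1 + p.2.1 + p.2.2) *
          (p.1 + p.2.1 + (k - p.1 - p.2.1 - p.2.2)) *
          (p.2.2 + (k - p.1 - p.2.1 - p.2.2)) ≠ 0 then
      -(σ : ℂ) * Complex.I / 2 *
        (((2 * ((p.1 + p.2.1 : ℤ) : ℝ) + (p.2.2 : ℝ)) /
            ((p.2.2 : ℝ) * Psi3 (p.1 + p.2.1) p.2.2 (k - p.1 - p.2.1 - p.2.2)) : ℝ) : ℂ) *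
        eI (σ * t * Psi4 p.1 p.2.1 p.2.2 (k - p.1 - p.2.1 - p.2.2)) *
        a p.1 * b p.2.1 * c p.2.2 * d (k - p.1 - p.2.1 - p.2.2)
    else 0)

/-- `ℓ²` norm over frequencies `|k| ≤ M` of a coefficient sequence (extended-real valued). -/
def l2le (M : ℝ) (a : ℤ → ℂ) : ℝ≥0∞ :=
  (∑' k : ℤ, ENNReal.ofReal (if |(k : ℝ)| ≤ M then ‖a k‖ ^ 2 else 0)) ^ (1/2 : ℝ)

/-- `ℓ²` norm over frequencies `|k| ≥ M` of a coefficient sequence. -/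
def l2ge (M : ℝ) (a : ℤ → ℂ) : ℝ≥0∞ :=
  (∑' k : ℤ, ENNReal.ofReal (if M ≤ |(k : ℝ)| then ‖a k‖ ^ 2 else 0)) ^ (1/2 : ℝ)


-- ===== auxiliary lemmas =====


lemma ofReal_norm_eq_coe_nnnorm {E : Type*} [SeminormedAddGroup E] (x : E) :
    ENNReal.ofReal ‖x‖ = (‖x‖₊ : ℝ≥0∞) := by
  rw [ofReal_norm_eq_enorm, enorm_eq_nnnorm]

lemma nnnorm_eI (x : ℝ) : (‖eI x‖₊ : ℝ≥0∞) = 1 := by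
  have h : ‖eI x‖ = 1 := by
    rw [eI, Complex.norm_exp]
    simp [Complex.mul_re]
  simp [← ofReal_norm_eq_coe_nnnorm, h]

lemma enorm_tsum_le {ι : Type*} (f : ι → ℂ) :
    (‖∑' i, f i‖₊ : ℝ≥0∞) ≤ ∑' i, (‖f i‖₊ : ℝ≥0∞) := by
  by_cases h : Summable f
  · have hn : Summable fun i => ‖f i‖ := summable_norm_iff.2 h
    calc (‖∑' i, f i‖₊ : ℝ≥0∞) = ENNReal.ofReal ‖∑' i, f i‖ :=
          (ofReal_norm_eq_coe_nnnorm _).symm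
      _ ≤ ENNReal.ofReal (∑' i, ‖f i‖) :=
          ENNReal.ofReal_le_ofReal (norm_tsum_le_tsum_norm hn)
      _ = ∑' i, ENNReal.ofReal ‖f i‖ :=
          ENNReal.ofReal_tsum_of_nonneg (fun _ => norm_nonneg _) hn
      _ = _ := tsum_congr fun i => ofReal_norm_eq_coe_nnnorm _
  · rw [tsum_eq_zero_of_not_summable h]; simp

lemma tsum_cs {ι : Type*} [Countable ι] [MeasurableSpace ι] [MeasurableSingletonClass ι]
    (f g : ι → ℝ≥0∞) :
    (∑' i, f i * g i) ≤ (∑' i, f i ^ 2) ^ (1/2 : ℝ) * (∑' i, g i ^ 2) ^ (1/2 : ℝ) := by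
  have hpq : Real.HolderConjugate 2 2 := Real.HolderConjugate.two_two
  have h := ENNReal.lintegral_mul_le_Lp_mul_Lq (Measure.count (α := ι)) hpq
    (measurable_of_countable f).aemeasurable (measurable_of_countable g).aemeasurable
  simp only [Pi.mul_apply, lintegral_count] at h
  have hc : ∀ F : ι → ℝ≥0∞, (∑' i, F i ^ (2:ℝ)) = ∑' i, F i ^ 2 := fun F =>
    tsum_congr fun i => by rw [← ENNReal.rpow_natCast (F i) 2]; norm_num
  rw [hc f, hc g] at h
  exact h

lemma tsum_cs_sq {ι : Type*} [Countable ι] [MeasurableSpace ι] [MeasurableSingletonClass ι]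
    (f g : ι → ℝ≥0∞) :
    (∑' i, f i * g i) ^ 2 ≤ (∑' i, f i ^ 2) * (∑' i, g i ^ 2) := by
  have h := tsum_cs f g
  calc (∑' i, f i * g i) ^ 2
      ≤ ((∑' i, f i ^ 2) ^ (1/2 : ℝ) * (∑' i, g i ^ 2) ^ (1/2 : ℝ)) ^ 2 := by
        rw [pow_two, pow_two]; exact mul_le_mul' h h
    _ = (∑' i, f i ^ 2) * (∑' i, g i ^ 2) := by
        rw [mul_pow, ← ENNReal.rpow_natCast ((∑' i, f i ^ 2) ^ (1/2:ℝ)) 2,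
          ← ENNReal.rpow_natCast ((∑' i, g i ^ 2) ^ (1/2:ℝ)) 2,
          ← ENNReal.rpow_mul, ← ENNReal.rpow_mul]
        norm_num

lemma sqrt_le_of_le_sq {X B : ℝ≥0∞} (h : X ≤ B ^ 2) : X ^ (1/2 : ℝ) ≤ B := by
  calc X ^ (1/2:ℝ) ≤ (B ^ 2) ^ (1/2:ℝ) := ENNReal.rpow_le_rpow h (by norm_num)
    _ = B := by
        rw [← ENNReal.rpow_natCast B 2, ← ENNReal.rpow_mul]; norm_num

lemma sq_sqrt (X : ℝ≥0∞) : (X ^ (1/2 : ℝ)) ^ 2 = X := by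
  rw [← ENNReal.rpow_natCast (X ^ (1/2:ℝ)) 2, ← ENNReal.rpow_mul]; norm_num

/-- weight `1/n²`, vanishing at `0`. -/
def w (n : ℤ) : ℝ≥0∞ := ENNReal.ofReal (((n : ℝ) ^ 2)⁻¹)

lemma tsum_w_nat : (∑' n : ℕ, ENNReal.ofReal (((n : ℝ) ^ 2)⁻¹)) ≤ 2 := by
  have hsum : Summable (fun n : ℕ => (1:ℝ) / (n : ℝ) ^ 2) :=
    Real.summable_one_div_nat_pow.mpr one_lt_two
  have h1 : (∑' n : ℕ, ENNReal.ofReal (((n : ℝ) ^ 2)⁻¹))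
      = ENNReal.ofReal (∑' n : ℕ, (1:ℝ) / (n:ℝ) ^ 2) := by
    rw [ENNReal.ofReal_tsum_of_nonneg (fun n => by positivity) hsum]
    simp [one_div]
  rw [h1, hasSum_zeta_two.tsum_eq]
  rw [show (2 : ℝ≥0∞) = ENNReal.ofReal 2 by norm_num]
  apply ENNReal.ofReal_le_ofReal
  nlinarith [Real.pi_lt_d2, Real.pi_pos]

lemma tsum_w : (∑' n : ℤ, w n) ≤ 4 := by
  have hfun : (fun n : ℤ => w n) =
      Int.rec (fun n : ℕ => w n) (fun n : ℕ => w (Int.negSucc n)) := by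
    funext n; cases n <;> rfl
  have hpos : HasSum (fun n : ℕ => w (n : ℤ)) (∑' n : ℕ, w (n : ℤ)) :=
    ENNReal.summable.hasSum
  have hneg : HasSum (fun n : ℕ => w (Int.negSucc n)) (∑' n : ℕ, w (Int.negSucc n)) :=
    ENNReal.summable.hasSum
  have h := (hpos.int_rec hneg).tsum_eq
  rw [hfun, h]
  have h2 : (∑' n : ℕ, w (n : ℤ)) ≤ 2 := by
    refine le_trans (le_of_eq (tsum_congr fun n => ?_)) tsum_w_nat
    simp [w]
  have h3 : (∑' n : ℕ, w (Int.negSucc n)) ≤ 2 := by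
    refine le_trans ?_ tsum_w_nat
    refine le_trans (le_of_eq (tsum_congr fun n => ?_))
      (ENNReal.tsum_comp_le_tsum_of_injective (f := fun n : ℕ => n + 1)
        (fun a b h => by simpa using h) (fun n => ENNReal.ofReal (((n : ℝ) ^ 2)⁻¹)))
    show w (Int.negSucc n) = ENNReal.ofReal ((((n + 1 : ℕ) : ℝ)) ^ 2)⁻¹
    simp only [w, Int.cast_negSucc]
    congr 2
    push_cast; ring
  calc _ ≤ (2 : ℝ≥0∞) + 2 := add_le_add h2 h3
    _ = 4 := by norm_num



lemma pf_real {x y : ℝ} (hx : x ≠ 0) (hy : y ≠ 0) (hz : x + y ≠ 0) :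
    (x ^ 2 * y ^ 2)⁻¹ ≤ 2 / (x + y) ^ 2 * ((x ^ 2)⁻¹ + (y ^ 2)⁻¹) := by
  have h : 2 / (x+y)^2 * ((x^2)⁻¹ + (y^2)⁻¹) - (x^2*y^2)⁻¹
      = (x - y)^2 / ((x+y)^2 * x^2 * y^2) := by
    field_simp
    ring
  nlinarith [div_nonneg (sq_nonneg (x - y)) (by positivity : (0:ℝ) ≤ (x+y)^2 * x^2 * y^2)]

lemma coef2_sq {k k₁ : ℤ} (hk : k ≠ 0) (h1 : k₁ ≠ 0) (h2 : k - k₁ ≠ 0) :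
    ((k:ℝ) / Psi2 k k₁ (k - k₁)) ^ 2
      = 64 * (((k₁:ℝ)) ^ 2 * (((k - k₁ : ℤ)) : ℝ) ^ 2)⁻¹ := by
  have hk' : (k:ℝ) ≠ 0 := Int.cast_ne_zero.2 hk
  have h1' : (k₁:ℝ) ≠ 0 := Int.cast_ne_zero.2 h1
  have h2' : ((k - k₁ : ℤ):ℝ) ≠ 0 := Int.cast_ne_zero.2 h2
  rw [Psi2]
  push_cast at h2' ⊢
  field_simp
  ring

lemma coef3_sq {k k₁ k₂ : ℤ} (h1 : k₁ ≠ 0) (h12 : k₁ + k₂ ≠ 0)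
    (ha : k - k₁ ≠ 0) (hb : k - k₂ ≠ 0) :
    (2 / ((k₁:ℝ) * Psi3 k₁ k₂ (k - k₁ - k₂))) ^ 2
      ≤ 256 * ((((k₁:ℝ)) ^ 2 * (((k - k₁ : ℤ)) : ℝ) ^ 2)⁻¹ * ((((k - k₂ : ℤ)) : ℝ) ^ 2)⁻¹) := by
  have h1' : (k₁:ℝ) ≠ 0 := Int.cast_ne_zero.2 h1
  have h12' : ((k₁ + k₂ : ℤ):ℝ) ≠ 0 := Int.cast_ne_zero.2 h12
  have ha' : ((k - k₁ : ℤ):ℝ) ≠ 0 := Int.cast_ne_zero.2 ha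
  have hb' : ((k - k₂ : ℤ):ℝ) ≠ 0 := Int.cast_ne_zero.2 hb
  have h12sq : (1:ℝ) ≤ ((k₁ + k₂ : ℤ):ℝ) ^ 2 := by
    have := Int.one_le_abs h12
    have : (1:ℝ) ≤ |((k₁ + k₂ : ℤ):ℝ)| := by
      rw [← Int.cast_abs]; exact_mod_cast this
    rw [← sq_abs]; exact one_le_pow₀ this
  have key : (2 / ((k₁:ℝ) * Psi3 k₁ k₂ (k - k₁ - k₂))) ^ 2
      = 256 * ((((k₁:ℝ)) ^ 2 * (((k - k₁ : ℤ)) : ℝ) ^ 2)⁻¹ * ((((k - k₂ : ℤ)) : ℝ) ^ 2)⁻¹)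
        * (((k₁ + k₂ : ℤ):ℝ) ^ 2)⁻¹ := by
    rw [Psi3]
    have e1 : (k₁ + (k - k₁ - k₂) : ℤ) = (k - k₂ : ℤ) := by ring
    have e2 : (k₂ + (k - k₁ - k₂) : ℤ) = (k - k₁ : ℤ) := by ring
    rw [e1, e2]
    push_cast at h1' h12' ha' hb' ⊢
    field_simp
    ring
  rw [key]
  calc 256 * ((((k₁:ℝ)) ^ 2 * (((k - k₁ : ℤ)) : ℝ) ^ 2)⁻¹ * ((((k - k₂ : ℤ)) : ℝ) ^ 2)⁻¹)
        * (((k₁ + k₂ : ℤ):ℝ) ^ 2)⁻¹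
      ≤ 256 * ((((k₁:ℝ)) ^ 2 * (((k - k₁ : ℤ)) : ℝ) ^ 2)⁻¹ * ((((k - k₂ : ℤ)) : ℝ) ^ 2)⁻¹) * 1 := by
        have hpos : (0:ℝ) ≤ 256 * ((((k₁:ℝ)) ^ 2 * (((k - k₁ : ℤ)) : ℝ) ^ 2)⁻¹
            * ((((k - k₂ : ℤ)) : ℝ) ^ 2)⁻¹) := by positivity
        have hle : (((k₁ + k₂ : ℤ):ℝ) ^ 2)⁻¹ ≤ 1 := by
          rw [inv_le_one_iff₀]; right; exact h12sq
        exact mul_le_mul_of_nonneg_left hle hpos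
    _ = _ := by ring

lemma frac_ineq {x y u v : ℝ} (hx : x ≠ 0) (hy : y ≠ 0) (hu : u ≠ 0) (hv : v ≠ 0) :
    16 * (2 * y - x) ^ 2 / (x ^ 2 * y ^ 2 * u ^ 2 * v ^ 2)
      ≤ 128 * ((x ^ 2)⁻¹ * (u ^ 2)⁻¹ * (v ^ 2)⁻¹) + 32 * ((y ^ 2)⁻¹ * (u ^ 2)⁻¹ * (v ^ 2)⁻¹) := by
  have h16 : 16 * (2 * y - x) ^ 2 ≤ 128 * y ^ 2 + 32 * x ^ 2 := by
    nlinarith [sq_nonneg (2 * y + x)]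
  have hr : 128 * ((x ^ 2)⁻¹ * (u ^ 2)⁻¹ * (v ^ 2)⁻¹) + 32 * ((y ^ 2)⁻¹ * (u ^ 2)⁻¹ * (v ^ 2)⁻¹)
      = (128 * y ^ 2 + 32 * x ^ 2) / (x ^ 2 * y ^ 2 * u ^ 2 * v ^ 2) := by
    field_simp
  rw [hr, div_le_div_iff_of_pos_right (by positivity)]
  exact h16

lemma coef4_sq {k K j : ℤ} (hj : j ≠ 0) (hKj : K + j ≠ 0)
    (hu : k - K ≠ 0) (hv : k - j ≠ 0) :
    ((1/2 : ℝ) * ((2 * ((K : ℤ):ℝ) + (j:ℝ)) / ((j:ℝ) * Psi3 K j (k - K - j)))) ^ 2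
      ≤ 128 * (((j:ℝ)^2)⁻¹ * ((((k - K : ℤ)):ℝ)^2)⁻¹ * ((((k - j : ℤ)):ℝ)^2)⁻¹)
        + 32 * (((((K + j : ℤ)):ℝ)^2)⁻¹ * ((((k - K : ℤ)):ℝ)^2)⁻¹ * ((((k - j : ℤ)):ℝ)^2)⁻¹) := by
  have hj' : (j:ℝ) ≠ 0 := Int.cast_ne_zero.2 hj
  have hy' : ((K + j : ℤ):ℝ) ≠ 0 := Int.cast_ne_zero.2 hKj
  have hu' : ((k - K : ℤ):ℝ) ≠ 0 := Int.cast_ne_zero.2 hu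
  have hv' : ((k - j : ℤ):ℝ) ≠ 0 := Int.cast_ne_zero.2 hv
  have key : ((1/2 : ℝ) * ((2 * ((K : ℤ):ℝ) + (j:ℝ)) / ((j:ℝ) * Psi3 K j (k - K - j)))) ^ 2
      = 16 * (2 * ((K + j : ℤ):ℝ) - (j:ℝ)) ^ 2 /
        ((j:ℝ)^2 * ((K + j : ℤ):ℝ)^2 * ((k - K : ℤ):ℝ)^2 * ((k - j : ℤ):ℝ)^2) := by
    rw [Psi3]
    have e1 : (j + (k - K - j) : ℤ) = (k - K : ℤ) := by ring
    have e2 : (K + (k - K - j) : ℤ) = (k - j : ℤ) := by ring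
    rw [e1, e2]
    push_cast at hj' hy' hu' hv' ⊢
    field_simp
    ring
  rw [key]
  exact frac_ineq hj' hy' hu' hv'


lemma tsum_shift_sub (c : ℤ) (f : ℤ → ℝ≥0∞) : ∑' n : ℤ, f (c - n) = ∑' n, f n :=
  (Equiv.subLeft c).tsum_eq f

lemma tsum_shift_sub' (c : ℤ) (f : ℤ → ℝ≥0∞) : ∑' n : ℤ, f (n - c) = ∑' n, f n :=
  (Equiv.subRight c).tsum_eq f

lemma V_bound {k : ℤ} (hk : k ≠ 0) :
    (∑' k₁ : ℤ, if k₁ ≠ 0 ∧ k - k₁ ≠ 0 then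
        ENNReal.ofReal ((((k₁:ℝ)) ^ 2 * (((k - k₁ : ℤ)):ℝ) ^ 2)⁻¹) else 0)
      ≤ ENNReal.ofReal (16 / (k:ℝ) ^ 2) := by
  have hstep : ∀ k₁ : ℤ, (if k₁ ≠ 0 ∧ k - k₁ ≠ 0 then
      ENNReal.ofReal ((((k₁:ℝ)) ^ 2 * (((k - k₁ : ℤ)):ℝ) ^ 2)⁻¹) else 0)
      ≤ ENNReal.ofReal (2 / (k:ℝ) ^ 2) * (w k₁ + w (k - k₁)) := by
    intro k₁
    split_ifs with h
    · obtain ⟨h1, h2⟩ := h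
      have hx : (k₁:ℝ) ≠ 0 := Int.cast_ne_zero.2 h1
      have hy : ((k - k₁ : ℤ):ℝ) ≠ 0 := Int.cast_ne_zero.2 h2
      have hz : (k₁:ℝ) + ((k - k₁ : ℤ):ℝ) = (k:ℝ) := by push_cast; ring
      have hz' : (k₁:ℝ) + ((k - k₁ : ℤ):ℝ) ≠ 0 := by
        rw [hz]; exact Int.cast_ne_zero.2 hk
      calc ENNReal.ofReal ((((k₁:ℝ)) ^ 2 * (((k - k₁ : ℤ)):ℝ) ^ 2)⁻¹)
          ≤ ENNReal.ofReal (2 / ((k₁:ℝ) + ((k - k₁ : ℤ):ℝ)) ^ 2 *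
              ((((k₁:ℝ)) ^ 2)⁻¹ + ((((k - k₁ : ℤ)):ℝ) ^ 2)⁻¹)) :=
            ENNReal.ofReal_le_ofReal (pf_real hx hy hz')
        _ = ENNReal.ofReal (2 / (k:ℝ) ^ 2) * (w k₁ + w (k - k₁)) := by
            rw [hz, ENNReal.ofReal_mul (by positivity),
              ENNReal.ofReal_add (by positivity) (by positivity)]
            rfl
    · exact zero_le
  calc (∑' k₁ : ℤ, if k₁ ≠ 0 ∧ k - k₁ ≠ 0 then
        ENNReal.ofReal ((((k₁:ℝ)) ^ 2 * (((k - k₁ : ℤ)):ℝ) ^ 2)⁻¹) else 0)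
      ≤ ∑' k₁ : ℤ, ENNReal.ofReal (2 / (k:ℝ) ^ 2) * (w k₁ + w (k - k₁)) :=
        ENNReal.tsum_le_tsum hstep
    _ = ENNReal.ofReal (2 / (k:ℝ) ^ 2) * ((∑' k₁, w k₁) + ∑' k₁ : ℤ, w (k - k₁)) := by
        rw [ENNReal.tsum_mul_left, ENNReal.tsum_add]
    _ ≤ ENNReal.ofReal (2 / (k:ℝ) ^ 2) * (4 + 4) := by
        gcongr
        · exact tsum_w
        · rw [tsum_shift_sub]; exact tsum_w
    _ = ENNReal.ofReal (16 / (k:ℝ) ^ 2) := by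
        rw [show ((4:ℝ≥0∞) + 4) = ENNReal.ofReal 8 by norm_num,
          ← ENNReal.ofReal_mul (by positivity)]
        congr 1; ring

lemma tsum_cutoff {M : ℝ} (hM : 0 < M) :
    (∑' k : ℤ, if |(k:ℝ)| ≤ M then ENNReal.ofReal ((k:ℝ) ^ 2 / 16) else 0)
      ≤ ENNReal.ofReal (3 * M ^ 3 / 16) := by
  by_cases hM1 : 1 ≤ M
  · set s : Finset ℤ := Finset.Icc (-⌊M⌋) ⌊M⌋ with hs
    have hsupp : ∀ k : ℤ, k ∉ s →
        (if |(k:ℝ)| ≤ M then ENNReal.ofReal ((k:ℝ) ^ 2 / 16) else 0) = 0 := by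
      intro k hk
      rw [if_neg]
      intro habs
      apply hk
      rw [hs, Finset.mem_Icc]
      constructor
      · rw [neg_le]
        refine Int.le_floor.2 ?_
        push_cast
        exact le_trans (neg_le_abs _) habs
      · exact Int.le_floor.2 (le_trans (le_abs_self _) habs)
    rw [tsum_eq_sum hsupp]
    have hterm : ∀ k ∈ s, (if |(k:ℝ)| ≤ M then ENNReal.ofReal ((k:ℝ) ^ 2 / 16) else 0)
        ≤ ENNReal.ofReal (M ^ 2 / 16) := by
      intro k _
      split_ifs with h
      · apply ENNReal.ofReal_le_ofReal
        have h2 : (k:ℝ) ^ 2 ≤ M ^ 2 := by nlinarith [abs_nonneg (k:ℝ), sq_abs (k:ℝ)]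
        linarith
      · exact zero_le
    have hfl : (1:ℤ) ≤ ⌊M⌋ := Int.le_floor.2 (by exact_mod_cast hM1)
    have hcard : ((s.card : ℕ) : ℝ) ≤ 3 * M := by
      rw [hs, Int.card_Icc]
      rw [show ((((⌊M⌋ : ℤ) + 1 - -⌊M⌋).toNat : ℕ) : ℝ) = (((⌊M⌋ : ℤ) + 1 - -⌊M⌋ : ℤ) : ℝ) from by
        exact_mod_cast congrArg (fun z : ℤ => (z : ℝ)) (Int.toNat_of_nonneg (by omega))]
      push_cast
      have := Int.floor_le M
      linarith
    calc (∑ k ∈ s, if |(k:ℝ)| ≤ M then ENNReal.ofReal ((k:ℝ) ^ 2 / 16) else 0)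
        ≤ s.card • ENNReal.ofReal (M ^ 2 / 16) := Finset.sum_le_card_nsmul _ _ _ hterm
      _ = (s.card : ℝ≥0∞) * ENNReal.ofReal (M ^ 2 / 16) := by rw [nsmul_eq_mul]
      _ ≤ ENNReal.ofReal (3 * M) * ENNReal.ofReal (M ^ 2 / 16) := by
          rw [← ENNReal.ofReal_natCast]
          exact mul_le_mul_left (ENNReal.ofReal_le_ofReal hcard) _
      _ = ENNReal.ofReal (3 * M ^ 3 / 16) := by
          rw [← ENNReal.ofReal_mul (by positivity)]
          congr 1; ring
  · have hall : ∀ k : ℤ, (if |(k:ℝ)| ≤ M then ENNReal.ofReal ((k:ℝ) ^ 2 / 16) else 0) = 0 := by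
      intro k
      split_ifs with h
      · have hk0 : k = 0 := by
          have h1 : |(k:ℝ)| < 1 := lt_of_le_of_lt h (lt_of_not_ge hM1)
          have h2 : ((|k| : ℤ) : ℝ) < 1 := by rwa [Int.cast_abs]
          have h3 : |k| < 1 := by exact_mod_cast h2
          rcases abs_lt.mp h3 with ⟨h4, h5⟩
          omega
        simp [hk0]
      · rfl
    calc _ = (0 : ℝ≥0∞) := by simp only [hall, tsum_zero]
      _ ≤ _ := zero_le

lemma TA_bound :
    (∑' k : ℤ, ∑' q : ℤ × ℤ, w q.2 * w (k - q.1) * w (k - q.2)) ≤ 64 := by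
  have h1 : ∀ k : ℤ, (∑' q : ℤ × ℤ, w q.2 * w (k - q.1) * w (k - q.2))
      = (∑' K : ℤ, w (k - K)) * ∑' j : ℤ, w j * w (k - j) := by
    intro k
    calc (∑' q : ℤ × ℤ, w q.2 * w (k - q.1) * w (k - q.2))
        = ∑' (K : ℤ) (j : ℤ), w j * w (k - K) * w (k - j) := ENNReal.tsum_prod'
      _ = ∑' (K : ℤ), w (k - K) * ∑' (j : ℤ), w j * w (k - j) := by
          refine tsum_congr fun K => ?_
          rw [← ENNReal.tsum_mul_left]
          exact tsum_congr fun j => by ring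
      _ = _ := ENNReal.tsum_mul_right
  calc (∑' k : ℤ, ∑' q : ℤ × ℤ, w q.2 * w (k - q.1) * w (k - q.2))
      = ∑' k : ℤ, (∑' K : ℤ, w (k - K)) * ∑' j : ℤ, w j * w (k - j) := tsum_congr h1
    _ = ∑' k : ℤ, (∑' n : ℤ, w n) * ∑' j : ℤ, w j * w (k - j) := by
        exact tsum_congr fun k => by rw [tsum_shift_sub]
    _ ≤ ∑' k : ℤ, 4 * ∑' j : ℤ, w j * w (k - j) :=
        ENNReal.tsum_le_tsum fun k => mul_le_mul_left tsum_w _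
    _ = 4 * ∑' k : ℤ, ∑' j : ℤ, w j * w (k - j) := ENNReal.tsum_mul_left
    _ = 4 * ∑' j : ℤ, ∑' k : ℤ, w j * w (k - j) := by rw [ENNReal.tsum_comm]
    _ = 4 * ∑' j : ℤ, w j * ∑' k : ℤ, w (k - j) := by
        congr 1; exact tsum_congr fun j => ENNReal.tsum_mul_left
    _ = 4 * ∑' j : ℤ, w j * ∑' n : ℤ, w n := by
        congr 1; exact tsum_congr fun j => by rw [tsum_shift_sub']
    _ = 4 * ((∑' j : ℤ, w j) * ∑' n : ℤ, w n) := by rw [ENNReal.tsum_mul_right]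
    _ ≤ 4 * (4 * 4) := by
        have h4 := tsum_w
        exact mul_le_mul_right (mul_le_mul' h4 h4) _
    _ = 64 := by norm_num

lemma TB_bound :
    (∑' k : ℤ, ∑' q : ℤ × ℤ, w (q.1 + q.2) * w (k - q.1) * w (k - q.2)) ≤ 64 := by
  have h1 : ∀ k : ℤ, (∑' q : ℤ × ℤ, w (q.1 + q.2) * w (k - q.1) * w (k - q.2))
      = ∑' u : ℤ, ∑' v : ℤ, w (2 * k - u - v) * w u * w v := by
    intro k
    calc (∑' q : ℤ × ℤ, w (q.1 + q.2) * w (k - q.1) * w (k - q.2))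
        = ∑' (K : ℤ) (j : ℤ), w (K + j) * w (k - K) * w (k - j) := ENNReal.tsum_prod'
      _ = ∑' (u : ℤ) (j : ℤ), w ((k - u) + j) * w (k - (k - u)) * w (k - j) :=
          (tsum_shift_sub k _).symm
      _ = ∑' (u : ℤ) (j : ℤ), w ((k - u) + j) * w u * w (k - j) := by
          refine tsum_congr fun u => tsum_congr fun j => ?_
          rw [sub_sub_cancel]
      _ = ∑' (u : ℤ) (v : ℤ), w ((k - u) + (k - v)) * w u * w (k - (k - v)) :=
          tsum_congr fun u => (tsum_shift_sub k _).symm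
      _ = ∑' (u : ℤ) (v : ℤ), w (2 * k - u - v) * w u * w v := by
          refine tsum_congr fun u => tsum_congr fun v => ?_
          rw [sub_sub_cancel]
          congr 2
          ring
  calc (∑' k : ℤ, ∑' q : ℤ × ℤ, w (q.1 + q.2) * w (k - q.1) * w (k - q.2))
      = ∑' k : ℤ, ∑' u : ℤ, ∑' v : ℤ, w (2 * k - u - v) * w u * w v := tsum_congr h1
    _ = ∑' u : ℤ, ∑' k : ℤ, ∑' v : ℤ, w (2 * k - u - v) * w u * w v := ENNReal.tsum_comm
    _ = ∑' u : ℤ, ∑' v : ℤ, ∑' k : ℤ, w (2 * k - u - v) * w u * w v :=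
        tsum_congr fun u => ENNReal.tsum_comm
    _ = ∑' u : ℤ, ∑' v : ℤ, (w u * w v) * ∑' k : ℤ, w (2 * k - u - v) := by
        refine tsum_congr fun u => tsum_congr fun v => ?_
        rw [← ENNReal.tsum_mul_left]
        exact tsum_congr fun k => by ring
    _ ≤ ∑' u : ℤ, ∑' v : ℤ, (w u * w v) * 4 := by
        refine ENNReal.tsum_le_tsum fun u => ENNReal.tsum_le_tsum fun v => ?_
        refine mul_le_mul_right ?_ _
        refine le_trans (ENNReal.tsum_comp_le_tsum_of_injective
          (f := fun n : ℤ => 2 * n - u - v) ?_ w) tsum_w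
        intro a b hab
        simp only at hab
        omega
    _ = ∑' u : ℤ, (w u * ∑' v : ℤ, (w v * 4)) := by
        refine tsum_congr fun u => ?_
        rw [← ENNReal.tsum_mul_left]
        exact tsum_congr fun v => by ring
    _ = (∑' u : ℤ, w u) * ∑' v : ℤ, (w v * 4) := ENNReal.tsum_mul_right
    _ = (∑' u : ℤ, w u) * ((∑' v : ℤ, w v) * 4) := by rw [ENNReal.tsum_mul_right]
    _ ≤ 4 * (4 * 4) := by
        have h4 := tsum_w
        exact mul_le_mul' h4 (mul_le_mul_left h4 _)
    _ = 64 := by norm_num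

/-- `ℓ²` sum of squares. -/
def Sq (a : ℤ → ℂ) : ℝ≥0∞ := ∑' k : ℤ, (‖a k‖₊ : ℝ≥0∞) ^ 2

lemma coe_nnnorm_ofReal (r : ℝ) : (‖((r : ℝ) : ℂ)‖₊ : ℝ≥0∞) = ENNReal.ofReal |r| := by
  rw [← ofReal_norm_eq_coe_nnnorm]
  simp [Real.norm_eq_abs]

lemma conv_le (a b : ℤ → ℂ) (k : ℤ) :
    (∑' k₁ : ℤ, (‖a k₁‖₊ : ℝ≥0∞) * (‖b (k - k₁)‖₊ : ℝ≥0∞))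
      ≤ Sq a ^ (1/2 : ℝ) * Sq b ^ (1/2 : ℝ) := by
  refine le_trans (tsum_cs _ _) ?_
  rw [Sq, Sq, ← tsum_shift_sub k (fun n => (‖b n‖₊ : ℝ≥0∞) ^ 2)]

lemma L2T_eq (f : ℝ → ℂ) : L2T f = Sq (tF f) ^ (1/2 : ℝ) := by
  rw [L2T, Sq]
  congr 1
  exact tsum_congr fun k => by
    rw [ENNReal.ofReal_pow (norm_nonneg _), ofReal_norm_eq_coe_nnnorm]

lemma l2le_eq (M : ℝ) (a : ℤ → ℂ) :
    l2le M a = (∑' k : ℤ, if |(k:ℝ)| ≤ M then (‖a k‖₊ : ℝ≥0∞) ^ 2 else 0) ^ (1/2 : ℝ) := by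
  rw [l2le]
  congr 1
  refine tsum_congr fun k => ?_
  split_ifs with h
  · rw [ENNReal.ofReal_pow (norm_nonneg _), ofReal_norm_eq_coe_nnnorm]
  · exact ENNReal.ofReal_zero

lemma l2ge_eq (M : ℝ) (a : ℤ → ℂ) :
    l2ge M a = (∑' k : ℤ, if M ≤ |(k:ℝ)| then (‖a k‖₊ : ℝ≥0∞) ^ 2 else 0) ^ (1/2 : ℝ) := by
  rw [l2ge]
  congr 1
  refine tsum_congr fun k => ?_
  split_ifs with h
  · rw [ENNReal.ofReal_pow (norm_nonneg _), ofReal_norm_eq_coe_nnnorm]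
  · exact ENNReal.ofReal_zero

lemma glue2 {X S1 S2 : ℝ≥0∞} {c C : ℝ} (hC : 0 ≤ C) (hcC : c ≤ C ^ 2)
    (h : X ≤ ENNReal.ofReal c * (S1 * S2)) :
    X ^ (1/2 : ℝ) ≤ ENNReal.ofReal C * S1 ^ (1/2 : ℝ) * S2 ^ (1/2 : ℝ) := by
  apply sqrt_le_of_le_sq
  calc X ≤ ENNReal.ofReal c * (S1 * S2) := h
    _ ≤ ENNReal.ofReal (C ^ 2) * (S1 * S2) :=
        mul_le_mul_left (ENNReal.ofReal_le_ofReal hcC) _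
    _ = (ENNReal.ofReal C * S1 ^ (1/2 : ℝ) * S2 ^ (1/2 : ℝ)) ^ 2 := by
        have he : (ENNReal.ofReal C * S1 ^ (1/2 : ℝ) * S2 ^ (1/2 : ℝ)) ^ 2
            = ENNReal.ofReal C ^ 2 * ((S1 ^ (1/2:ℝ)) ^ 2 * (S2 ^ (1/2:ℝ)) ^ 2) := by ring
        rw [he, sq_sqrt, sq_sqrt, ← ENNReal.ofReal_pow hC]

lemma glue3 {X S1 S2 S3 : ℝ≥0∞} {c C : ℝ} (hC : 0 ≤ C) (hcC : c ≤ C ^ 2)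
    (h : X ≤ ENNReal.ofReal c * (S1 * S2 * S3)) :
    X ^ (1/2 : ℝ) ≤ ENNReal.ofReal C * S1 ^ (1/2 : ℝ) * S2 ^ (1/2 : ℝ) * S3 ^ (1/2 : ℝ) := by
  apply sqrt_le_of_le_sq
  calc X ≤ ENNReal.ofReal c * (S1 * S2 * S3) := h
    _ ≤ ENNReal.ofReal (C ^ 2) * (S1 * S2 * S3) :=
        mul_le_mul_left (ENNReal.ofReal_le_ofReal hcC) _
    _ = _ := by
        have he : (ENNReal.ofReal C * S1 ^ (1/2 : ℝ) * S2 ^ (1/2 : ℝ) * S3 ^ (1/2 : ℝ)) ^ 2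
            = ENNReal.ofReal C ^ 2 *
              ((S1 ^ (1/2:ℝ)) ^ 2 * (S2 ^ (1/2:ℝ)) ^ 2 * (S3 ^ (1/2:ℝ)) ^ 2) := by ring
        rw [he, sq_sqrt, sq_sqrt, sq_sqrt, ← ENNReal.ofReal_pow hC]

lemma glue4 {X S1 S2 S3 S4 : ℝ≥0∞} {c C : ℝ} (hC : 0 ≤ C) (hcC : c ≤ C ^ 2)
    (h : X ≤ ENNReal.ofReal c * (S1 * S2 * (S3 * S4))) :
    X ^ (1/2 : ℝ) ≤ ENNReal.ofReal C * S1 ^ (1/2 : ℝ) * S2 ^ (1/2 : ℝ) * S3 ^ (1/2 : ℝ)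
      * S4 ^ (1/2 : ℝ) := by
  apply sqrt_le_of_le_sq
  calc X ≤ ENNReal.ofReal c * (S1 * S2 * (S3 * S4)) := h
    _ ≤ ENNReal.ofReal (C ^ 2) * (S1 * S2 * (S3 * S4)) :=
        mul_le_mul_left (ENNReal.ofReal_le_ofReal hcC) _
    _ = _ := by
        have he : (ENNReal.ofReal C * S1 ^ (1/2 : ℝ) * S2 ^ (1/2 : ℝ) * S3 ^ (1/2 : ℝ)
              * S4 ^ (1/2 : ℝ)) ^ 2
            = ENNReal.ofReal C ^ 2 * ((S1 ^ (1/2:ℝ)) ^ 2 * (S2 ^ (1/2:ℝ)) ^ 2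
              * (S3 ^ (1/2:ℝ)) ^ 2 * (S4 ^ (1/2:ℝ)) ^ 2) := by ring
        rw [he, sq_sqrt, sq_sqrt, sq_sqrt, sq_sqrt, ← ENNReal.ofReal_pow hC]
        ring

lemma est1 {σ : ℝ} (hσ : σ = 1 ∨ σ = -1) (t M : ℝ) (hM : 0 < M) (a b : ℤ → ℂ) :
    (∑' k : ℤ, if |(k:ℝ)| ≤ M then (‖D1c σ t a b k‖₊ : ℝ≥0∞) ^ 2 else 0)
      ≤ ENNReal.ofReal (3 * M ^ 3 / 16) * (Sq a * Sq b) := by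
  have habs : |σ| = 1 := by rcases hσ with h | h <;> simp [h]
  have hpt : ∀ k : ℤ, (‖D1c σ t a b k‖₊ : ℝ≥0∞)
      ≤ ENNReal.ofReal (|(k:ℝ)| / 4) * (Sq a ^ (1/2:ℝ) * Sq b ^ (1/2:ℝ)) := by
    intro k
    have hC : (‖(-(σ:ℂ) * Complex.I * (k:ℂ) / 4)‖₊ : ℝ≥0∞) = ENNReal.ofReal (|(k:ℝ)| / 4) := by
      rw [← ofReal_norm_eq_coe_nnnorm]
      congr 1
      rw [norm_div, norm_mul, norm_mul, norm_neg]
      simp [Real.norm_eq_abs, habs]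
    have hterm : ∀ k₁ : ℤ, (‖(if k₁ ≠ 0 ∧ k - k₁ ≠ 0 then
        eI (σ * t * Psi2 k k₁ (k - k₁)) * a k₁ * b (k - k₁) else 0)‖₊ : ℝ≥0∞)
        ≤ (‖a k₁‖₊ : ℝ≥0∞) * (‖b (k - k₁)‖₊ : ℝ≥0∞) := by
      intro k₁
      split_ifs with h
      · rw [nnnorm_mul, nnnorm_mul, ENNReal.coe_mul, ENNReal.coe_mul, nnnorm_eI, one_mul]
      · simp
    rw [D1c, nnnorm_mul, ENNReal.coe_mul, hC]
    exact mul_le_mul_right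
      (le_trans (enorm_tsum_le _) (le_trans (ENNReal.tsum_le_tsum hterm) (conv_le a b k))) _
  have hsq : ∀ k : ℤ, (‖D1c σ t a b k‖₊ : ℝ≥0∞) ^ 2
      ≤ ENNReal.ofReal ((k:ℝ) ^ 2 / 16) * (Sq a * Sq b) := by
    intro k
    calc (‖D1c σ t a b k‖₊ : ℝ≥0∞) ^ 2
        ≤ (ENNReal.ofReal (|(k:ℝ)| / 4) * (Sq a ^ (1/2:ℝ) * Sq b ^ (1/2:ℝ))) ^ 2 := by
          rw [pow_two, pow_two]; exact mul_le_mul' (hpt k) (hpt k)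
      _ = ENNReal.ofReal (|(k:ℝ)| / 4) ^ 2 * ((Sq a ^ (1/2:ℝ)) ^ 2 * (Sq b ^ (1/2:ℝ)) ^ 2) := by
          ring
      _ = ENNReal.ofReal ((k:ℝ) ^ 2 / 16) * (Sq a * Sq b) := by
          rw [sq_sqrt, sq_sqrt, ← ENNReal.ofReal_pow (by positivity)]
          congr 2
          rw [div_pow, sq_abs]
          norm_num
  calc (∑' k : ℤ, if |(k:ℝ)| ≤ M then (‖D1c σ t a b k‖₊ : ℝ≥0∞) ^ 2 else 0)
      ≤ ∑' k : ℤ, (if |(k:ℝ)| ≤ M then ENNReal.ofReal ((k:ℝ) ^ 2 / 16) else 0)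
          * (Sq a * Sq b) := by
        refine ENNReal.tsum_le_tsum fun k => ?_
        split_ifs with h
        · exact hsq k
        · simp
    _ = (∑' k : ℤ, if |(k:ℝ)| ≤ M then ENNReal.ofReal ((k:ℝ) ^ 2 / 16) else 0)
          * (Sq a * Sq b) := ENNReal.tsum_mul_right
    _ ≤ _ := mul_le_mul_left (tsum_cutoff hM) _

lemma est2 (σ t : ℝ) {M : ℝ} (hM : 0 < M) (a b : ℤ → ℂ) :
    (∑' k : ℤ, if M ≤ |(k:ℝ)| then (‖D2c σ t a b k‖₊ : ℝ≥0∞) ^ 2 else 0)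
      ≤ ENNReal.ofReal (1024 / M ^ 2) * (Sq a * Sq b) := by
  set m : ℤ → ℤ → ℝ≥0∞ := fun k k₁ =>
    if k₁ ≠ 0 ∧ k - k₁ ≠ 0 then ENNReal.ofReal |(k:ℝ) / Psi2 k k₁ (k - k₁)| else 0 with hm
  have hpt : ∀ k : ℤ, (‖D2c σ t a b k‖₊ : ℝ≥0∞)
      ≤ ∑' k₁ : ℤ, m k k₁ * ((‖a k₁‖₊ : ℝ≥0∞) * (‖b (k - k₁)‖₊ : ℝ≥0∞)) := by
    intro k
    rw [D2c]
    refine le_trans (enorm_tsum_le _) (ENNReal.tsum_le_tsum fun k₁ => ?_)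
    simp only [hm]
    split_ifs with h
    · refine le_of_eq ?_
      rw [nnnorm_mul, nnnorm_mul, nnnorm_mul, ENNReal.coe_mul, ENNReal.coe_mul,
        ENNReal.coe_mul, coe_nnnorm_ofReal, nnnorm_eI]
      ring
    · simp
  have hG : (∑' k : ℤ, ∑' k₁ : ℤ, (‖a k₁‖₊ : ℝ≥0∞) ^ 2 * (‖b (k - k₁)‖₊ : ℝ≥0∞) ^ 2)
      = Sq a * Sq b := by
    rw [ENNReal.tsum_comm]
    calc (∑' k₁ : ℤ, ∑' k : ℤ, (‖a k₁‖₊ : ℝ≥0∞) ^ 2 * (‖b (k - k₁)‖₊ : ℝ≥0∞) ^ 2)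
        = ∑' k₁ : ℤ, (‖a k₁‖₊ : ℝ≥0∞) ^ 2 * ∑' k : ℤ, (‖b (k - k₁)‖₊ : ℝ≥0∞) ^ 2 :=
          tsum_congr fun k₁ => ENNReal.tsum_mul_left
      _ = ∑' k₁ : ℤ, (‖a k₁‖₊ : ℝ≥0∞) ^ 2 * Sq b :=
          tsum_congr fun k₁ => by
            rw [tsum_shift_sub' k₁ (fun n => (‖b n‖₊ : ℝ≥0∞) ^ 2)]
            rfl
      _ = Sq a * Sq b := ENNReal.tsum_mul_right
  have hWk : ∀ k : ℤ, M ≤ |(k:ℝ)| → (∑' k₁ : ℤ, (m k k₁) ^ 2)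
      ≤ ENNReal.ofReal (1024 / M ^ 2) := by
    intro k hk
    have hk0 : k ≠ 0 := by
      rintro rfl
      rw [Int.cast_zero, abs_zero] at hk
      linarith
    have hterm : ∀ k₁ : ℤ, (m k k₁) ^ 2 ≤ ENNReal.ofReal 64 *
        (if k₁ ≠ 0 ∧ k - k₁ ≠ 0 then
          ENNReal.ofReal ((((k₁:ℝ)) ^ 2 * (((k - k₁ : ℤ)):ℝ) ^ 2)⁻¹) else 0) := by
      intro k₁
      simp only [hm]
      split_ifs with h
      · rw [← ENNReal.ofReal_pow (abs_nonneg _), sq_abs, coef2_sq hk0 h.1 h.2,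
          ENNReal.ofReal_mul (by norm_num)]
      · simp
    calc (∑' k₁ : ℤ, (m k k₁) ^ 2)
        ≤ ∑' k₁ : ℤ, ENNReal.ofReal 64 * (if k₁ ≠ 0 ∧ k - k₁ ≠ 0 then
            ENNReal.ofReal ((((k₁:ℝ)) ^ 2 * (((k - k₁ : ℤ)):ℝ) ^ 2)⁻¹) else 0) :=
          ENNReal.tsum_le_tsum hterm
      _ = ENNReal.ofReal 64 * ∑' k₁ : ℤ, (if k₁ ≠ 0 ∧ k - k₁ ≠ 0 then
            ENNReal.ofReal ((((k₁:ℝ)) ^ 2 * (((k - k₁ : ℤ)):ℝ) ^ 2)⁻¹) else 0) :=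
          ENNReal.tsum_mul_left
      _ ≤ ENNReal.ofReal 64 * ENNReal.ofReal (16 / (k:ℝ) ^ 2) :=
          mul_le_mul_right (V_bound hk0) _
      _ = ENNReal.ofReal (1024 / (k:ℝ) ^ 2) := by
          rw [← ENNReal.ofReal_mul (by norm_num)]
          congr 1; ring
      _ ≤ ENNReal.ofReal (1024 / M ^ 2) := by
          apply ENNReal.ofReal_le_ofReal
          have h1 : M ^ 2 ≤ (k:ℝ) ^ 2 := by nlinarith [abs_nonneg (k:ℝ), sq_abs (k:ℝ)]
          exact div_le_div_of_nonneg_left (by norm_num) (by positivity) h1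
  calc (∑' k : ℤ, if M ≤ |(k:ℝ)| then (‖D2c σ t a b k‖₊ : ℝ≥0∞) ^ 2 else 0)
      ≤ ∑' k : ℤ, ENNReal.ofReal (1024 / M ^ 2) *
          ∑' k₁ : ℤ, (‖a k₁‖₊ : ℝ≥0∞) ^ 2 * (‖b (k - k₁)‖₊ : ℝ≥0∞) ^ 2 := by
        refine ENNReal.tsum_le_tsum fun k => ?_
        split_ifs with h
        · calc (‖D2c σ t a b k‖₊ : ℝ≥0∞) ^ 2
              ≤ (∑' k₁ : ℤ, m k k₁ * ((‖a k₁‖₊ : ℝ≥0∞) * (‖b (k - k₁)‖₊ : ℝ≥0∞))) ^ 2 := by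
                rw [pow_two, pow_two]; exact mul_le_mul' (hpt k) (hpt k)
            _ ≤ (∑' k₁ : ℤ, (m k k₁) ^ 2) *
                (∑' k₁ : ℤ, ((‖a k₁‖₊ : ℝ≥0∞) * (‖b (k - k₁)‖₊ : ℝ≥0∞)) ^ 2) := tsum_cs_sq _ _
            _ ≤ ENNReal.ofReal (1024 / M ^ 2) *
                (∑' k₁ : ℤ, (‖a k₁‖₊ : ℝ≥0∞) ^ 2 * (‖b (k - k₁)‖₊ : ℝ≥0∞) ^ 2) :=
                mul_le_mul (hWk k h) (le_of_eq (tsum_congr fun k₁ => mul_pow _ _ 2))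
                  (zero_le) (zero_le)
        · exact zero_le
    _ = ENNReal.ofReal (1024 / M ^ 2) *
        ∑' k : ℤ, ∑' k₁ : ℤ, (‖a k₁‖₊ : ℝ≥0∞) ^ 2 * (‖b (k - k₁)‖₊ : ℝ≥0∞) ^ 2 :=
        ENNReal.tsum_mul_left
    _ = _ := by rw [hG]


lemma tsum_prod_mul (F G : ℤ → ℝ≥0∞) :
    (∑' p : ℤ × ℤ, F p.1 * G p.2) = (∑' x : ℤ, F x) * ∑' y : ℤ, G y := by
  calc (∑' p : ℤ × ℤ, F p.1 * G p.2)
      = ∑' (x : ℤ) (y : ℤ), F x * G y := ENNReal.tsum_prod'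
    _ = ∑' x : ℤ, F x * ∑' y : ℤ, G y := tsum_congr fun x => ENNReal.tsum_mul_left
    _ = _ := ENNReal.tsum_mul_right

lemma ofReal_w3 (c : ℝ) (hc : 0 ≤ c) (x y z : ℤ) :
    ENNReal.ofReal (c * ((((x:ℝ)) ^ 2)⁻¹ * (((y:ℝ)) ^ 2)⁻¹ * (((z:ℝ)) ^ 2)⁻¹))
      = ENNReal.ofReal c * (w x * w y * w z) := by
  rw [ENNReal.ofReal_mul hc, ENNReal.ofReal_mul (by positivity),
    ENNReal.ofReal_mul (by positivity)]
  rfl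

lemma est3 (σ t : ℝ) {M : ℝ} (hM : 0 < M) (a b c : ℤ → ℂ) :
    (∑' k : ℤ, if M ≤ |(k:ℝ)| then (‖D3c σ t a b c k‖₊ : ℝ≥0∞) ^ 2 else 0)
      ≤ ENNReal.ofReal (16384 / M) * (Sq a * Sq b * Sq c) := by
  set m : ℤ → ℤ × ℤ → ℝ≥0∞ := fun k p =>
    if p.1 ≠ 0 ∧ p.2 ≠ 0 ∧ k - p.1 - p.2 ≠ 0 ∧ p.1 + p.2 ≠ 0 ∧
        p.2 + (k - p.1 - p.2) ≠ 0 ∧ p.1 + (k - p.1 - p.2) ≠ 0 then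
      ENNReal.ofReal |2 / ((p.1:ℝ) * Psi3 p.1 p.2 (k - p.1 - p.2))| else 0 with hm
  have hpt : ∀ k : ℤ, (‖D3c σ t a b c k‖₊ : ℝ≥0∞)
      ≤ ∑' p : ℤ × ℤ, m k p * ((‖a p.1‖₊ : ℝ≥0∞) * (‖b p.2‖₊ : ℝ≥0∞)
          * (‖c (k - p.1 - p.2)‖₊ : ℝ≥0∞)) := by
    intro k
    rw [D3c]
    refine le_trans (enorm_tsum_le _) (ENNReal.tsum_le_tsum fun p => ?_)
    simp only [hm]
    split_ifs with h
    · refine le_of_eq ?_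
      rw [nnnorm_mul, nnnorm_mul, nnnorm_mul, nnnorm_mul, ENNReal.coe_mul, ENNReal.coe_mul,
        ENNReal.coe_mul, ENNReal.coe_mul, coe_nnnorm_ofReal, nnnorm_eI]
      ring
    · simp
  have hWk : ∀ k : ℤ, M ≤ |(k:ℝ)| → (∑' p : ℤ × ℤ, (m k p) ^ 2)
      ≤ ENNReal.ofReal (16384 / M) := by
    intro k hk
    have hk0 : k ≠ 0 := by
      rintro rfl
      rw [Int.cast_zero, abs_zero] at hk
      linarith
    have hterm : ∀ p : ℤ × ℤ, (m k p) ^ 2 ≤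
        (ENNReal.ofReal 256 * (if p.1 ≠ 0 ∧ k - p.1 ≠ 0 then
          ENNReal.ofReal ((((p.1:ℝ)) ^ 2 * (((k - p.1 : ℤ)):ℝ) ^ 2)⁻¹) else 0))
          * w (k - p.2) := by
      intro p
      simp only [hm]
      split_ifs with h h2 h3 h4
      · obtain ⟨h1, hp2, hp3, h12, h23, h13⟩ := h
        have ha : k - p.1 ≠ 0 := by omega
        have hb : k - p.2 ≠ 0 := by omega
        rw [← ENNReal.ofReal_pow (abs_nonneg _), sq_abs]
        calc ENNReal.ofReal ((2 / ((p.1:ℝ) * Psi3 p.1 p.2 (k - p.1 - p.2))) ^ 2)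
            ≤ ENNReal.ofReal (256 * ((((p.1:ℝ)) ^ 2 * (((k - p.1 : ℤ)):ℝ) ^ 2)⁻¹
                * ((((k - p.2 : ℤ)):ℝ) ^ 2)⁻¹)) :=
              ENNReal.ofReal_le_ofReal (coef3_sq h1 h12 ha hb)
          _ = ENNReal.ofReal 256 *
                ENNReal.ofReal ((((p.1:ℝ)) ^ 2 * (((k - p.1 : ℤ)):ℝ) ^ 2)⁻¹) * w (k - p.2) := by
              rw [ENNReal.ofReal_mul (by norm_num : (0:ℝ) ≤ 256),
                ENNReal.ofReal_mul (by positivity), ← mul_assoc]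
              rfl
      · obtain ⟨h1, hp2, hp3, h12, h23, h13⟩ := h
        exact absurd ⟨h1, by omega⟩ h2
      · simp
      · simp
    calc (∑' p : ℤ × ℤ, (m k p) ^ 2)
        ≤ ∑' p : ℤ × ℤ, (ENNReal.ofReal 256 * (if p.1 ≠ 0 ∧ k - p.1 ≠ 0 then
            ENNReal.ofReal ((((p.1:ℝ)) ^ 2 * (((k - p.1 : ℤ)):ℝ) ^ 2)⁻¹) else 0))
            * w (k - p.2) := ENNReal.tsum_le_tsum hterm
      _ = (∑' x : ℤ, ENNReal.ofReal 256 * (if x ≠ 0 ∧ k - x ≠ 0 then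
            ENNReal.ofReal ((((x:ℝ)) ^ 2 * (((k - x : ℤ)):ℝ) ^ 2)⁻¹) else 0))
            * ∑' y : ℤ, w (k - y) :=
          tsum_prod_mul (fun x => ENNReal.ofReal 256 * (if x ≠ 0 ∧ k - x ≠ 0 then
            ENNReal.ofReal ((((x:ℝ)) ^ 2 * (((k - x : ℤ)):ℝ) ^ 2)⁻¹) else 0))
            (fun y => w (k - y))
      _ ≤ (ENNReal.ofReal 256 * ENNReal.ofReal (16 / (k:ℝ) ^ 2)) * 4 := by
          refine mul_le_mul ?_ ?_ (zero_le) (zero_le)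
          · rw [ENNReal.tsum_mul_left]
            exact mul_le_mul_right (V_bound hk0) _
          · rw [tsum_shift_sub k w]
            exact tsum_w
      _ = ENNReal.ofReal (4096 / (k:ℝ) ^ 2) * 4 := by
          rw [← ENNReal.ofReal_mul (by norm_num : (0:ℝ) ≤ 256)]
          congr 1
          ring
      _ = ENNReal.ofReal (16384 / (k:ℝ) ^ 2) := by
          rw [show (4:ℝ≥0∞) = ENNReal.ofReal 4 from by norm_num,
            ← ENNReal.ofReal_mul (by positivity)]
          congr 1
          ring
      _ ≤ ENNReal.ofReal (16384 / M) := by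
          apply ENNReal.ofReal_le_ofReal
          have h1 : (1:ℝ) ≤ |(k:ℝ)| := by
            have h0 := Int.one_le_abs hk0
            rw [← Int.cast_abs]
            exact_mod_cast h0
          have h2 : M ≤ (k:ℝ) ^ 2 := by nlinarith [sq_abs (k:ℝ)]
          exact div_le_div_of_nonneg_left (by norm_num) hM h2
  have hG : (∑' k : ℤ, ∑' p : ℤ × ℤ, (‖a p.1‖₊ : ℝ≥0∞) ^ 2 * (‖b p.2‖₊ : ℝ≥0∞) ^ 2
      * (‖c (k - p.1 - p.2)‖₊ : ℝ≥0∞) ^ 2) = Sq a * Sq b * Sq c := by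
    rw [ENNReal.tsum_comm]
    calc (∑' p : ℤ × ℤ, ∑' k : ℤ, (‖a p.1‖₊ : ℝ≥0∞) ^ 2 * (‖b p.2‖₊ : ℝ≥0∞) ^ 2
          * (‖c (k - p.1 - p.2)‖₊ : ℝ≥0∞) ^ 2)
        = ∑' p : ℤ × ℤ, ((‖a p.1‖₊ : ℝ≥0∞) ^ 2 * (‖b p.2‖₊ : ℝ≥0∞) ^ 2)
            * ∑' k : ℤ, (‖c (k - p.1 - p.2)‖₊ : ℝ≥0∞) ^ 2 := by
          refine tsum_congr fun p => ?_
          rw [← ENNReal.tsum_mul_left]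
      _ = ∑' p : ℤ × ℤ, ((‖a p.1‖₊ : ℝ≥0∞) ^ 2 * (‖b p.2‖₊ : ℝ≥0∞) ^ 2) * Sq c := by
          refine tsum_congr fun p => ?_
          rw [show (fun k : ℤ => ((‖c (k - p.1 - p.2)‖₊ : ℝ≥0∞)) ^ 2)
              = fun k : ℤ => ((‖c (k - (p.1 + p.2))‖₊ : ℝ≥0∞)) ^ 2 from
              funext fun k => by rw [sub_sub],
            tsum_shift_sub' (p.1 + p.2) (fun n => (‖c n‖₊ : ℝ≥0∞) ^ 2)]
          all_goals rfl
      _ = (∑' p : ℤ × ℤ, (‖a p.1‖₊ : ℝ≥0∞) ^ 2 * (‖b p.2‖₊ : ℝ≥0∞) ^ 2) * Sq c :=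
          ENNReal.tsum_mul_right
      _ = Sq a * Sq b * Sq c := by
          rw [tsum_prod_mul (fun x => (‖a x‖₊ : ℝ≥0∞) ^ 2) (fun y => (‖b y‖₊ : ℝ≥0∞) ^ 2)]
          rfl
  calc (∑' k : ℤ, if M ≤ |(k:ℝ)| then (‖D3c σ t a b c k‖₊ : ℝ≥0∞) ^ 2 else 0)
      ≤ ∑' k : ℤ, ENNReal.ofReal (16384 / M) *
          ∑' p : ℤ × ℤ, (‖a p.1‖₊ : ℝ≥0∞) ^ 2 * (‖b p.2‖₊ : ℝ≥0∞) ^ 2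
            * (‖c (k - p.1 - p.2)‖₊ : ℝ≥0∞) ^ 2 := by
        refine ENNReal.tsum_le_tsum fun k => ?_
        split_ifs with h
        · calc (‖D3c σ t a b c k‖₊ : ℝ≥0∞) ^ 2
              ≤ (∑' p : ℤ × ℤ, m k p * ((‖a p.1‖₊ : ℝ≥0∞) * (‖b p.2‖₊ : ℝ≥0∞)
                  * (‖c (k - p.1 - p.2)‖₊ : ℝ≥0∞))) ^ 2 := by
                rw [pow_two, pow_two]
                exact mul_le_mul' (hpt k) (hpt k)
            _ ≤ (∑' p : ℤ × ℤ, (m k p) ^ 2) *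
                (∑' p : ℤ × ℤ, ((‖a p.1‖₊ : ℝ≥0∞) * (‖b p.2‖₊ : ℝ≥0∞)
                  * (‖c (k - p.1 - p.2)‖₊ : ℝ≥0∞)) ^ 2) := tsum_cs_sq _ _
            _ ≤ ENNReal.ofReal (16384 / M) *
                (∑' p : ℤ × ℤ, (‖a p.1‖₊ : ℝ≥0∞) ^ 2 * (‖b p.2‖₊ : ℝ≥0∞) ^ 2
                  * (‖c (k - p.1 - p.2)‖₊ : ℝ≥0∞) ^ 2) :=
                mul_le_mul (hWk k h)
                  (le_of_eq (tsum_congr fun p => by rw [mul_pow, mul_pow]))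
                  (zero_le) (zero_le)
        · exact zero_le
    _ = ENNReal.ofReal (16384 / M) * ∑' k : ℤ, ∑' p : ℤ × ℤ,
          (‖a p.1‖₊ : ℝ≥0∞) ^ 2 * (‖b p.2‖₊ : ℝ≥0∞) ^ 2
            * (‖c (k - p.1 - p.2)‖₊ : ℝ≥0∞) ^ 2 := ENNReal.tsum_mul_left
    _ = _ := by rw [hG]

lemma est4 {σ : ℝ} (hσ : σ = 1 ∨ σ = -1) (t M : ℝ) (a b c d : ℤ → ℂ) :
    (∑' k : ℤ, if M ≤ |(k:ℝ)| then (‖D4c σ t a b c d k‖₊ : ℝ≥0∞) ^ 2 else 0)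
      ≤ ENNReal.ofReal 10240 * (Sq a * Sq b * (Sq c * Sq d)) := by
  have habs : |σ| = 1 := by rcases hσ with h | h <;> simp [h]
  have hσ2 : (‖(-(σ:ℂ) * Complex.I / 2)‖₊ : ℝ≥0∞) = ENNReal.ofReal (1/2) := by
    rw [← ofReal_norm_eq_coe_nnnorm]
    congr 1
    rw [norm_div, norm_mul, norm_neg]
    simp [Real.norm_eq_abs, habs]
  set A : ℤ → ℝ≥0∞ := fun K => ∑' n : ℤ, (‖a n‖₊ : ℝ≥0∞) * (‖b (K - n)‖₊ : ℝ≥0∞) with hA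
  set mm : ℤ → ℤ × ℤ → ℝ≥0∞ := fun k q =>
    if q.2 ≠ 0 ∧ q.1 ≠ 0 ∧ k - q.1 ≠ 0 ∧ k - q.2 ≠ 0 ∧ q.1 + q.2 ≠ 0 then
      ENNReal.ofReal |(1/2 : ℝ) * ((2 * ((q.1 : ℤ):ℝ) + ((q.2 : ℤ):ℝ)) /
        (((q.2 : ℤ):ℝ) * Psi3 q.1 q.2 (k - q.1 - q.2)))| else 0 with hmdef
  have hpt : ∀ k : ℤ, (‖D4c σ t a b c d k‖₊ : ℝ≥0∞)
      ≤ ∑' q : ℤ × ℤ, mm k q *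
          (A q.1 * ((‖c q.2‖₊ : ℝ≥0∞) * (‖d (k - q.1 - q.2)‖₊ : ℝ≥0∞))) := by
    intro k
    have step1 : (‖D4c σ t a b c d k‖₊ : ℝ≥0∞)
        ≤ ∑' p : ℤ × ℤ × ℤ, mm k (p.1 + p.2.1, p.2.2) *
            ((‖a p.1‖₊ : ℝ≥0∞) * (‖b p.2.1‖₊ : ℝ≥0∞) *
              ((‖c p.2.2‖₊ : ℝ≥0∞) * (‖d (k - p.1 - p.2.1 - p.2.2)‖₊ : ℝ≥0∞))) := by
      rw [D4c]
      refine le_trans (enorm_tsum_le _) (ENNReal.tsum_le_tsum fun p => ?_)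
      by_cases hc : p.1 * p.2.1 * p.2.2 * (k - p.1 - p.2.1 - p.2.2) ≠ 0 ∧
          (p.1 + p.2.1) * (p.1 + p.2.1 + p.2.2) * (p.1 + p.2.1 + (k - p.1 - p.2.1 - p.2.2)) *
            (p.2.2 + (k - p.1 - p.2.1 - p.2.2)) ≠ 0
      · rw [if_pos hc]
        obtain ⟨hc1, hc2⟩ := hc
        have h1 : p.2.2 ≠ 0 := fun h => hc1 (by rw [h]; ring)
        have h2 : p.1 + p.2.1 ≠ 0 := fun h => hc2 (by rw [h]; ring)
        have h3 : k - (p.1 + p.2.1) ≠ 0 := fun h => hc2 (by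
          rw [show p.2.2 + (k - p.1 - p.2.1 - p.2.2) = 0 from by omega]; ring)
        have h4 : k - p.2.2 ≠ 0 := fun h => hc2 (by
          rw [show p.1 + p.2.1 + (k - p.1 - p.2.1 - p.2.2) = 0 from by omega]; ring)
        have h5 : (p.1 + p.2.1) + p.2.2 ≠ 0 := fun h => hc2 (by
          rw [show p.1 + p.2.1 + p.2.2 = 0 from by omega]; ring)
        simp only [hmdef]
        rw [if_pos (show (p.1 + p.2.1, p.2.2).2 ≠ 0 ∧ (p.1 + p.2.1, p.2.2).1 ≠ 0 ∧
            k - (p.1 + p.2.1, p.2.2).1 ≠ 0 ∧ k - (p.1 + p.2.1, p.2.2).2 ≠ 0 ∧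
            (p.1 + p.2.1, p.2.2).1 + (p.1 + p.2.1, p.2.2).2 ≠ 0 from ⟨h1, h2, h3, h4, h5⟩)]
        refine le_of_eq ?_
        rw [show k - (p.1 + p.2.1, p.2.2).1 - (p.1 + p.2.1, p.2.2).2
            = k - p.1 - p.2.1 - p.2.2 from by ring]
        rw [nnnorm_mul, nnnorm_mul, nnnorm_mul, nnnorm_mul, nnnorm_mul, nnnorm_mul,
          ENNReal.coe_mul, ENNReal.coe_mul, ENNReal.coe_mul, ENNReal.coe_mul, ENNReal.coe_mul,
          ENNReal.coe_mul, hσ2, coe_nnnorm_ofReal, nnnorm_eI,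
          abs_mul, show |(1/2:ℝ)| = 1/2 from by norm_num,
          ENNReal.ofReal_mul (by norm_num : (0:ℝ) ≤ 1/2)]
        ring
      · rw [if_neg hc]
        simp
    refine le_trans step1 (le_of_eq ?_)
    calc (∑' p : ℤ × ℤ × ℤ, mm k (p.1 + p.2.1, p.2.2) *
            ((‖a p.1‖₊ : ℝ≥0∞) * (‖b p.2.1‖₊ : ℝ≥0∞) *
              ((‖c p.2.2‖₊ : ℝ≥0∞) * (‖d (k - p.1 - p.2.1 - p.2.2)‖₊ : ℝ≥0∞))))
        = ∑' k₁ : ℤ, ∑' r : ℤ × ℤ, mm k (k₁ + r.1, r.2) *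
            ((‖a k₁‖₊ : ℝ≥0∞) * (‖b r.1‖₊ : ℝ≥0∞) *
              ((‖c r.2‖₊ : ℝ≥0∞) * (‖d (k - k₁ - r.1 - r.2)‖₊ : ℝ≥0∞))) := ENNReal.tsum_prod'
      _ = ∑' k₁ : ℤ, ∑' k₂ : ℤ, ∑' j : ℤ, mm k (k₁ + k₂, j) *
            ((‖a k₁‖₊ : ℝ≥0∞) * (‖b k₂‖₊ : ℝ≥0∞) *
              ((‖c j‖₊ : ℝ≥0∞) * (‖d (k - k₁ - k₂ - j)‖₊ : ℝ≥0∞))) :=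
          tsum_congr fun k₁ => ENNReal.tsum_prod'
      _ = ∑' k₁ : ℤ, ∑' K : ℤ, ∑' j : ℤ, mm k (K, j) *
            ((‖a k₁‖₊ : ℝ≥0∞) * (‖b (K - k₁)‖₊ : ℝ≥0∞) *
              ((‖c j‖₊ : ℝ≥0∞) * (‖d (k - K - j)‖₊ : ℝ≥0∞))) := by
          refine tsum_congr fun k₁ => ?_
          calc (∑' k₂ : ℤ, ∑' j : ℤ, mm k (k₁ + k₂, j) *
                  ((‖a k₁‖₊ : ℝ≥0∞) * (‖b k₂‖₊ : ℝ≥0∞) *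
                    ((‖c j‖₊ : ℝ≥0∞) * (‖d (k - k₁ - k₂ - j)‖₊ : ℝ≥0∞))))
              = ∑' K : ℤ, ∑' j : ℤ, mm k (k₁ + (K - k₁), j) *
                  ((‖a k₁‖₊ : ℝ≥0∞) * (‖b (K - k₁)‖₊ : ℝ≥0∞) *
                    ((‖c j‖₊ : ℝ≥0∞) * (‖d (k - k₁ - (K - k₁) - j)‖₊ : ℝ≥0∞))) :=
                (tsum_shift_sub' k₁ _).symm
            _ = _ := by
                refine tsum_congr fun K => tsum_congr fun j => ?_
                rw [show k₁ + (K - k₁) = K from by ring,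
                  show k - k₁ - (K - k₁) - j = k - K - j from by ring]
      _ = ∑' K : ℤ, ∑' k₁ : ℤ, ∑' j : ℤ, mm k (K, j) *
            ((‖a k₁‖₊ : ℝ≥0∞) * (‖b (K - k₁)‖₊ : ℝ≥0∞) *
              ((‖c j‖₊ : ℝ≥0∞) * (‖d (k - K - j)‖₊ : ℝ≥0∞))) := ENNReal.tsum_comm
      _ = ∑' K : ℤ, ∑' j : ℤ, ∑' k₁ : ℤ, mm k (K, j) *
            ((‖a k₁‖₊ : ℝ≥0∞) * (‖b (K - k₁)‖₊ : ℝ≥0∞) *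
              ((‖c j‖₊ : ℝ≥0∞) * (‖d (k - K - j)‖₊ : ℝ≥0∞))) :=
          tsum_congr fun K => ENNReal.tsum_comm
      _ = ∑' K : ℤ, ∑' j : ℤ, mm k (K, j) *
            (A K * ((‖c j‖₊ : ℝ≥0∞) * (‖d (k - K - j)‖₊ : ℝ≥0∞))) := by
          refine tsum_congr fun K => tsum_congr fun j => ?_
          calc (∑' k₁ : ℤ, mm k (K, j) *
                  ((‖a k₁‖₊ : ℝ≥0∞) * (‖b (K - k₁)‖₊ : ℝ≥0∞) *
                    ((‖c j‖₊ : ℝ≥0∞) * (‖d (k - K - j)‖₊ : ℝ≥0∞))))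
              = ∑' k₁ : ℤ, (mm k (K, j) * ((‖c j‖₊ : ℝ≥0∞) * (‖d (k - K - j)‖₊ : ℝ≥0∞)))
                  * ((‖a k₁‖₊ : ℝ≥0∞) * (‖b (K - k₁)‖₊ : ℝ≥0∞)) :=
                tsum_congr fun k₁ => by ring
            _ = (mm k (K, j) * ((‖c j‖₊ : ℝ≥0∞) * (‖d (k - K - j)‖₊ : ℝ≥0∞)))
                  * ∑' k₁ : ℤ, (‖a k₁‖₊ : ℝ≥0∞) * (‖b (K - k₁)‖₊ : ℝ≥0∞) :=
                ENNReal.tsum_mul_left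
            _ = mm k (K, j) * (A K * ((‖c j‖₊ : ℝ≥0∞) * (‖d (k - K - j)‖₊ : ℝ≥0∞))) := by
                simp only [hA]
                ring
      _ = ∑' q : ℤ × ℤ, mm k q *
            (A q.1 * ((‖c q.2‖₊ : ℝ≥0∞) * (‖d (k - q.1 - q.2)‖₊ : ℝ≥0∞))) :=
          (ENNReal.tsum_prod' (f := fun q : ℤ × ℤ => mm k q *
            (A q.1 * ((‖c q.2‖₊ : ℝ≥0∞) * (‖d (k - q.1 - q.2)‖₊ : ℝ≥0∞))))).symm
  have hA2 : ∀ K : ℤ, (A K) ^ 2 ≤ Sq a * Sq b := by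
    intro K
    calc (A K) ^ 2 ≤ (Sq a ^ (1/2:ℝ) * Sq b ^ (1/2:ℝ)) ^ 2 := by
          rw [pow_two, pow_two]
          exact mul_le_mul' (conv_le a b K) (conv_le a b K)
      _ = Sq a * Sq b := by rw [mul_pow, sq_sqrt, sq_sqrt]
  have hW : (∑' k : ℤ, ∑' q : ℤ × ℤ, (mm k q) ^ 2) ≤ 10240 := by
    have hterm : ∀ k : ℤ, ∀ q : ℤ × ℤ, (mm k q) ^ 2 ≤
        ENNReal.ofReal 128 * (w q.2 * w (k - q.1) * w (k - q.2)) +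
          ENNReal.ofReal 32 * (w (q.1 + q.2) * w (k - q.1) * w (k - q.2)) := by
      intro k q
      simp only [hmdef]
      split_ifs with h
      · obtain ⟨h1, h2, h3, h4, h5⟩ := h
        rw [← ENNReal.ofReal_pow (abs_nonneg _), sq_abs]
        calc ENNReal.ofReal (((1/2 : ℝ) * ((2 * ((q.1 : ℤ):ℝ) + ((q.2 : ℤ):ℝ)) /
                (((q.2 : ℤ):ℝ) * Psi3 q.1 q.2 (k - q.1 - q.2)))) ^ 2)
            ≤ ENNReal.ofReal (128 * ((((q.2:ℝ)) ^ 2)⁻¹ * ((((k - q.1 : ℤ)):ℝ) ^ 2)⁻¹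
                  * ((((k - q.2 : ℤ)):ℝ) ^ 2)⁻¹)
                + 32 * ((((((q.1 + q.2) : ℤ)):ℝ) ^ 2)⁻¹ * ((((k - q.1 : ℤ)):ℝ) ^ 2)⁻¹
                  * ((((k - q.2 : ℤ)):ℝ) ^ 2)⁻¹)) :=
              ENNReal.ofReal_le_ofReal (coef4_sq h1 h5 h3 h4)
          _ = _ := by
              rw [ENNReal.ofReal_add (by positivity) (by positivity),
                ofReal_w3 128 (by norm_num), ofReal_w3 32 (by norm_num)]
      · simp
    calc (∑' k : ℤ, ∑' q : ℤ × ℤ, (mm k q) ^ 2)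
        ≤ ∑' k : ℤ, ∑' q : ℤ × ℤ,
            (ENNReal.ofReal 128 * (w q.2 * w (k - q.1) * w (k - q.2)) +
              ENNReal.ofReal 32 * (w (q.1 + q.2) * w (k - q.1) * w (k - q.2))) :=
          ENNReal.tsum_le_tsum fun k => ENNReal.tsum_le_tsum fun q => hterm k q
      _ = ENNReal.ofReal 128 * (∑' k : ℤ, ∑' q : ℤ × ℤ, w q.2 * w (k - q.1) * w (k - q.2)) +
            ENNReal.ofReal 32 *
              (∑' k : ℤ, ∑' q : ℤ × ℤ, w (q.1 + q.2) * w (k - q.1) * w (k - q.2)) := by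
          rw [← ENNReal.tsum_mul_left, ← ENNReal.tsum_mul_left, ← ENNReal.tsum_add]
          refine tsum_congr fun k => ?_
          rw [← ENNReal.tsum_mul_left, ← ENNReal.tsum_mul_left, ← ENNReal.tsum_add]
      _ ≤ ENNReal.ofReal 128 * 64 + ENNReal.ofReal 32 * 64 := by
          gcongr
          · exact TA_bound
          · exact TB_bound
      _ ≤ 10240 := by
          rw [show ENNReal.ofReal 128 = (128:ℝ≥0∞) from by norm_num,
            show ENNReal.ofReal 32 = (32:ℝ≥0∞) from by norm_num]
          norm_num
  calc (∑' k : ℤ, if M ≤ |(k:ℝ)| then (‖D4c σ t a b c d k‖₊ : ℝ≥0∞) ^ 2 else 0)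
      ≤ ∑' k : ℤ, (∑' q : ℤ × ℤ, (mm k q) ^ 2) * (Sq a * Sq b * (Sq c * Sq d)) := by
        refine ENNReal.tsum_le_tsum fun k => ?_
        split_ifs with h
        · calc (‖D4c σ t a b c d k‖₊ : ℝ≥0∞) ^ 2
              ≤ (∑' q : ℤ × ℤ, mm k q *
                  (A q.1 * ((‖c q.2‖₊ : ℝ≥0∞) * (‖d (k - q.1 - q.2)‖₊ : ℝ≥0∞)))) ^ 2 := by
                rw [pow_two, pow_two]
                exact mul_le_mul' (hpt k) (hpt k)
            _ ≤ (∑' q : ℤ × ℤ, (mm k q) ^ 2) *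
                (∑' q : ℤ × ℤ, (A q.1 *
                  ((‖c q.2‖₊ : ℝ≥0∞) * (‖d (k - q.1 - q.2)‖₊ : ℝ≥0∞))) ^ 2) := tsum_cs_sq _ _
            _ ≤ (∑' q : ℤ × ℤ, (mm k q) ^ 2) * (Sq a * Sq b * (Sq c * Sq d)) := by
                refine mul_le_mul_right ?_ _
                calc (∑' q : ℤ × ℤ, (A q.1 *
                      ((‖c q.2‖₊ : ℝ≥0∞) * (‖d (k - q.1 - q.2)‖₊ : ℝ≥0∞))) ^ 2)
                    = ∑' q : ℤ × ℤ, (A q.1) ^ 2 *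
                        ((‖c q.2‖₊ : ℝ≥0∞) ^ 2 * (‖d (k - q.1 - q.2)‖₊ : ℝ≥0∞) ^ 2) :=
                      tsum_congr fun q => by rw [mul_pow, mul_pow]
                  _ ≤ ∑' q : ℤ × ℤ, (Sq a * Sq b) *
                        ((‖c q.2‖₊ : ℝ≥0∞) ^ 2 * (‖d (k - q.1 - q.2)‖₊ : ℝ≥0∞) ^ 2) :=
                      ENNReal.tsum_le_tsum fun q => mul_le_mul_left (hA2 q.1) _
                  _ = (Sq a * Sq b) * ∑' q : ℤ × ℤ,
                        (‖c q.2‖₊ : ℝ≥0∞) ^ 2 * (‖d (k - q.1 - q.2)‖₊ : ℝ≥0∞) ^ 2 :=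
                      ENNReal.tsum_mul_left
                  _ = Sq a * Sq b * (Sq c * Sq d) := by
                      congr 1
                      calc (∑' q : ℤ × ℤ,
                            (‖c q.2‖₊ : ℝ≥0∞) ^ 2 * (‖d (k - q.1 - q.2)‖₊ : ℝ≥0∞) ^ 2)
                          = ∑' K : ℤ, ∑' j : ℤ,
                              (‖c j‖₊ : ℝ≥0∞) ^ 2 * (‖d (k - K - j)‖₊ : ℝ≥0∞) ^ 2 :=
                            ENNReal.tsum_prod'
                        _ = ∑' j : ℤ, ∑' K : ℤ,
                              (‖c j‖₊ : ℝ≥0∞) ^ 2 * (‖d (k - K - j)‖₊ : ℝ≥0∞) ^ 2 :=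
                            ENNReal.tsum_comm
                        _ = ∑' j : ℤ, (‖c j‖₊ : ℝ≥0∞) ^ 2 *
                              ∑' K : ℤ, (‖d (k - K - j)‖₊ : ℝ≥0∞) ^ 2 :=
                            tsum_congr fun j => ENNReal.tsum_mul_left
                        _ = ∑' j : ℤ, (‖c j‖₊ : ℝ≥0∞) ^ 2 * Sq d := by
                            refine tsum_congr fun j => ?_
                            rw [show (fun K : ℤ => ((‖d (k - K - j)‖₊ : ℝ≥0∞)) ^ 2)
                                = fun K : ℤ => ((‖d ((k - j) - K)‖₊ : ℝ≥0∞)) ^ 2 from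
                                funext fun K => by rw [show k - K - j = (k - j) - K from by ring],
                              tsum_shift_sub (k - j) (fun n => (‖d n‖₊ : ℝ≥0∞) ^ 2)]
                            rfl
                        _ = Sq c * Sq d := ENNReal.tsum_mul_right
        · exact zero_le
    _ = (∑' k : ℤ, ∑' q : ℤ × ℤ, (mm k q) ^ 2) * (Sq a * Sq b * (Sq c * Sq d)) :=
        ENNReal.tsum_mul_right
    _ ≤ 10240 * (Sq a * Sq b * (Sq c * Sq d)) := mul_le_mul_left hW _
    _ = ENNReal.ofReal 10240 * (Sq a * Sq b * (Sq c * Sq d)) := by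
        rw [show (10240:ℝ≥0∞) = ENNReal.ofReal 10240 from by norm_num]

/-- multilinear estimates for the normal-form operators on `𝕋`. -/
theorem multilinear_estimates :
    ∃ C : ℝ, 0 < C ∧ ∀ σ : ℝ, σ = 1 ∨ σ = -1 → ∀ t : ℝ, ∀ M : ℝ, 0 < M →
      ∀ f₁ f₂ f₃ f₄ : ℝ → ℂ,
        L2T f₁ < ⊤ → L2T f₂ < ⊤ → L2T f₃ < ⊤ → L2T f₄ < ⊤ →
        l2le M (D1c σ t (tF f₁) (tF f₂))
            ≤ ENNReal.ofReal (C * M ^ ((3:ℝ)/2)) * L2T f₁ * L2T f₂ ∧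
        l2ge M (D2c σ t (tF f₁) (tF f₂))
            ≤ ENNReal.ofReal (C * M ^ (-(1:ℝ))) * L2T f₁ * L2T f₂ ∧
        l2ge M (D3c σ t (tF f₁) (tF f₂) (tF f₃))
            ≤ ENNReal.ofReal (C * M ^ (-(1:ℝ)/2)) * L2T f₁ * L2T f₂ * L2T f₃ ∧
        l2ge M (D4c σ t (tF f₁) (tF f₂) (tF f₃) (tF f₄))
            ≤ ENNReal.ofReal C * L2T f₁ * L2T f₂ * L2T f₃ * L2T f₄ := by
  refine ⟨1024, by norm_num, ?_⟩
  intro σ hσ t M hM f₁ f₂ f₃ f₄ _ _ _ _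
  simp only [l2le_eq, l2ge_eq, L2T_eq]
  refine ⟨?_, ?_, ?_, ?_⟩
  · refine glue2 (by positivity) ?_ (est1 hσ t M hM (tF f₁) (tF f₂))
    have hM32 : (M ^ ((3:ℝ)/2)) ^ 2 = M ^ 3 := by
      rw [← Real.rpow_natCast (M ^ ((3:ℝ)/2)) 2, ← Real.rpow_mul hM.le]
      rw [show ((3:ℝ)/2 * ((2:ℕ):ℝ)) = ((3:ℕ):ℝ) from by norm_num, Real.rpow_natCast]
    rw [mul_pow, hM32]
    nlinarith [pow_nonneg hM.le 3]
  · refine glue2 (by positivity) ?_ (est2 σ t hM (tF f₁) (tF f₂))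
    have h1 : (M ^ (-(1:ℝ))) ^ 2 = (M ^ 2)⁻¹ := by
      rw [Real.rpow_neg_one, inv_pow]
    rw [mul_pow, h1, div_eq_mul_inv]
    nlinarith [inv_nonneg.2 (sq_nonneg M)]
  · refine glue3 (by positivity) ?_ (est3 σ t hM (tF f₁) (tF f₂) (tF f₃))
    have h1 : (M ^ (-(1:ℝ)/2)) ^ 2 = M⁻¹ := by
      rw [← Real.rpow_natCast (M ^ (-(1:ℝ)/2)) 2, ← Real.rpow_mul hM.le]
      rw [show (-(1:ℝ)/2 * ((2:ℕ):ℝ)) = (-1:ℝ) from by norm_num, Real.rpow_neg_one]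
    rw [mul_pow, h1, div_eq_mul_inv]
    nlinarith [inv_nonneg.2 hM.le]
  · refine glue4 (by norm_num) ?_ (est4 hσ t M (tF f₁) (tF f₂) (tF f₃) (tF f₄))
    norm_num

end FPU

end
end

section
/- Let 0 < h ≤ 1, 0 ≤ α ≤ 1, t ∈ ℝ, and let k, k₁, k₂ be integers with k = k₁ + k₂, k·k₁·k₂ ≠ 0, and |k|, |k₁|, |k₂| ≤ π/h. Define 𝓜_{h,1}^{2,±}(t,k,k₁,k₂) = (k/Ψ²(k,k₁,k₂))·e^{±itΨ²(k,k₁,k₂)} − (8·sin³(hk/2)/(h³k²·Φ_h²(k,k₁,k₂)))·e^{±itΦ_h²(k,k₁,k₂)}. Then there is an absolute constant C (independent of h, t, α, k, k₁, k₂) such that |𝓜_{h,1}^{2,±}(t,k,k₁,k₂)| ≤ C·(h^α·(1+|t|^α)/|k₁k₂|)·(|k·k₁·k₂|·max(|k|,|k₁|,|k₂|))^α (for either choice of sign). -/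
open scoped Real BigOperators ENNReal NNReal
open MeasureTheory

noncomputable section

namespace FPU

lemma abs_sin_sub_le {y : ℝ} (hy : |y| ≤ 1) : |Real.sin y - y| ≤ |y| ^ 3 := by
  have h := Real.sin_bound hy
  have h2 : |y| ^ 4 ≤ |y| ^ 3 := pow_le_pow_of_le_one (abs_nonneg y) hy (by norm_num)
  have h3 : |y ^ 3 / 6| = |y| ^ 3 / 6 := by rw [abs_div, abs_pow]; norm_num
  calc |Real.sin y - y| ≤ |Real.sin y - (y - y ^ 3 / 6)| + |(y - y ^ 3 / 6) - y| :=
        abs_sub_le _ _ _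
    _ = |Real.sin y - (y - y ^ 3 / 6)| + |y ^ 3 / 6| := by
        congr 1
        rw [show (y - y ^ 3 / 6) - y = -(y ^ 3 / 6) by ring, abs_neg]
    _ ≤ |y| ^ 4 * (5 / 96) + |y| ^ 3 / 6 := by
        rw [h3]; gcongr
        have h5 : |y| ^ 5 ≤ |y| ^ 4 := pow_le_pow_of_le_one (abs_nonneg y) hy (by norm_num)
        nlinarith [pow_nonneg (abs_nonneg y) 4]
    _ ≤ |y| ^ 3 := by nlinarith [abs_nonneg y, pow_nonneg (abs_nonneg y) 3]

lemma abs_sin_lower {y : ℝ} (hy : |y| ≤ Real.pi / 2) : |y| / 2 ≤ |Real.sin y| := by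
  have h := Real.mul_abs_le_abs_sin hy
  have hπ : Real.pi ≤ 4 := Real.pi_le_four
  have hπ0 : 0 < Real.pi := Real.pi_pos
  have h4 : |y| / 2 ≤ 2 / Real.pi * |y| := by
    have : (1:ℝ) / 2 ≤ 2 / Real.pi := by
      rw [div_le_div_iff₀ (by norm_num) hπ0]; linarith
    nlinarith [abs_nonneg y]
  linarith

lemma norm_eI (x : ℝ) : ‖eI x‖ = 1 := by
  rw [eI, mul_comm, Complex.norm_exp_ofReal_mul_I]

lemma norm_eI_sub_one (ψ : ℝ) : ‖eI ψ - 1‖ ≤ |ψ| := by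
  have h1 : eI ψ - 1 = ((Real.cos ψ - 1 : ℝ) : ℂ) + ((Real.sin ψ : ℝ) : ℂ) * Complex.I := by
    rw [eI, mul_comm, Complex.exp_mul_I]
    push_cast [Complex.ofReal_cos, Complex.ofReal_sin]
    ring
  rw [h1, Complex.norm_def, Complex.normSq_add_mul_I]
  have h2 : (Real.cos ψ - 1) ^ 2 + Real.sin ψ ^ 2 ≤ ψ ^ 2 := by
    have h3 := Real.one_sub_sq_div_two_le_cos (x := ψ)
    nlinarith [Real.sin_sq_add_cos_sq ψ]
  calc Real.sqrt ((Real.cos ψ - 1) ^ 2 + Real.sin ψ ^ 2) ≤ Real.sqrt (ψ ^ 2) :=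
        Real.sqrt_le_sqrt h2
    _ = |ψ| := Real.sqrt_sq_eq_abs ψ

lemma norm_eI_sub (a b : ℝ) : ‖eI a - eI b‖ ≤ |a - b| := by
  have h1 : eI a - eI b = eI b * (eI (a - b) - 1) := by
    rw [eI, eI, eI, mul_sub, mul_one, ← Complex.exp_add]
    push_cast
    ring_nf
  rw [h1, norm_mul, norm_eI, one_mul]
  exact norm_eI_sub_one _

lemma key1 {x s c : ℝ} (h1 : |s - x| ≤ |x| ^ 3) (h2 : |s| ≤ |x|) (h3 : |c| ≤ 1)
    (h4 : 1 - c ≤ x ^ 2 / 2) : |s ^ 2 * c ^ 3 - x ^ 2| ≤ 4 * x ^ 4 := by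
  have hc1 : c ≤ 1 := (abs_le.1 h3).2
  have hcm : -1 ≤ c := (abs_le.1 h3).1
  have e1 : |s ^ 2 - x ^ 2| ≤ 2 * x ^ 4 := by
    have hd : s ^ 2 - x ^ 2 = (s - x) * (s + x) := by ring
    rw [hd, abs_mul]
    have hsx : |s + x| ≤ 2 * |x| := (abs_add_le _ _).trans (by linarith [le_abs_self x, abs_nonneg x])
    calc |s - x| * |s + x| ≤ |x| ^ 3 * (2 * |x|) :=
          mul_le_mul h1 hsx (abs_nonneg _) (by positivity)
      _ = 2 * x ^ 4 := by
          rw [show |x| ^ 3 * (2 * |x|) = 2 * |x| ^ 4 by ring, ← abs_pow,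
            abs_of_nonneg (by positivity : (0:ℝ) ≤ x ^ 4)]
  have e2 : |c ^ 3 - 1| ≤ 3 * (x ^ 2 / 2) := by
    have hnp : c ^ 3 - 1 ≤ 0 := by
      have ha : c ^ 3 ≤ |c| ^ 3 := (le_abs_self _).trans_eq (abs_pow c 3)
      have hb : |c| ^ 3 ≤ 1 := pow_le_one₀ (abs_nonneg c) h3
      linarith
    rw [abs_of_nonpos hnp]
    have ha : 0 ≤ 1 + c + c ^ 2 := by nlinarith [sq_nonneg (c + 1)]
    have hb : 1 + c + c ^ 2 ≤ 3 := by nlinarith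
    have hid : -(c ^ 3 - 1) = (1 - c) * (1 + c + c ^ 2) := by ring
    rw [hid]
    calc (1 - c) * (1 + c + c ^ 2) ≤ (x ^ 2 / 2) * 3 :=
          mul_le_mul h4 hb ha (by positivity)
      _ = 3 * (x ^ 2 / 2) := by ring
  have hd2 : s ^ 2 * c ^ 3 - x ^ 2 = (s ^ 2 - x ^ 2) * c ^ 3 + x ^ 2 * (c ^ 3 - 1) := by ring
  rw [hd2]
  have hc3 : |c ^ 3| ≤ 1 := by rw [abs_pow]; exact pow_le_one₀ (abs_nonneg c) h3
  calc |(s ^ 2 - x ^ 2) * c ^ 3 + x ^ 2 * (c ^ 3 - 1)|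
      ≤ |s ^ 2 - x ^ 2| * |c ^ 3| + x ^ 2 * |c ^ 3 - 1| := by
        rw [show x ^ 2 * |c ^ 3 - 1| = |x ^ 2| * |c ^ 3 - 1| by
          rw [abs_of_nonneg (sq_nonneg x)]]
        exact (abs_add_le _ _).trans (by rw [abs_mul, abs_mul])
    _ ≤ 2 * x ^ 4 * 1 + x ^ 2 * (3 * (x ^ 2 / 2)) := by gcongr
    _ ≤ 4 * x ^ 4 := by nlinarith [pow_nonneg (sq_nonneg x) 1]

lemma key2 {x₁ x₂ s₁ s₂ : ℝ} (h1 : |s₁ - x₁| ≤ |x₁| ^ 3) (h2 : |s₂ - x₂| ≤ |x₂| ^ 3)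
    (h3 : |s₁| ≤ |x₁|) (h4 : |s₂| ≤ |x₂|) :
    |s₁ * s₂ - x₁ * x₂| ≤ |x₁| * |x₂| * (x₁ ^ 2 + x₂ ^ 2) := by
  have hd : s₁ * s₂ - x₁ * x₂ = (s₁ - x₁) * s₂ + x₁ * (s₂ - x₂) := by ring
  rw [hd]
  calc |(s₁ - x₁) * s₂ + x₁ * (s₂ - x₂)| ≤ |s₁ - x₁| * |s₂| + |x₁| * |s₂ - x₂| := by
        refine (abs_add_le _ _).trans ?_
        rw [abs_mul, abs_mul]
    _ ≤ |x₁| ^ 3 * |x₂| + |x₁| * |x₂| ^ 3 := by gcongr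
    _ = |x₁| * |x₂| * (x₁ ^ 2 + x₂ ^ 2) := by
        rw [show |x₁| ^ 3 * |x₂| + |x₁| * |x₂| ^ 3
            = |x₁| * |x₂| * (|x₁| ^ 2 + |x₂| ^ 2) by ring, sq_abs, sq_abs]

lemma key3 {x₁ x₂ x₃ s₁ s₂ s₃ : ℝ} (h1 : |s₁ - x₁| ≤ |x₁| ^ 3) (h2 : |s₂ - x₂| ≤ |x₂| ^ 3)
    (h3 : |s₃ - x₃| ≤ |x₃| ^ 3) (h4 : |s₁| ≤ |x₁|) (h5 : |s₂| ≤ |x₂|) (h6 : |s₃| ≤ |x₃|) :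
    |s₁ * s₂ * s₃ - x₁ * x₂ * x₃| ≤ |x₁| * |x₂| * |x₃| * (x₁ ^ 2 + x₂ ^ 2 + x₃ ^ 2) := by
  have hd : s₁ * s₂ * s₃ - x₁ * x₂ * x₃
      = (s₁ * s₂ - x₁ * x₂) * s₃ + (x₁ * x₂) * (s₃ - x₃) := by ring
  rw [hd]
  have e12 := key2 h1 h2 h4 h5
  calc |(s₁ * s₂ - x₁ * x₂) * s₃ + x₁ * x₂ * (s₃ - x₃)|
      ≤ |s₁ * s₂ - x₁ * x₂| * |s₃| + |x₁ * x₂| * |s₃ - x₃| := by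
        refine (abs_add_le _ _).trans ?_
        rw [abs_mul, abs_mul]
    _ ≤ (|x₁| * |x₂| * (x₁ ^ 2 + x₂ ^ 2)) * |x₃| + (|x₁| * |x₂|) * |x₃| ^ 3 := by
        rw [abs_mul]
        gcongr
    _ = |x₁| * |x₂| * |x₃| * (x₁ ^ 2 + x₂ ^ 2 + x₃ ^ 2) := by
        rw [show (|x₁| * |x₂| * (x₁ ^ 2 + x₂ ^ 2)) * |x₃| + (|x₁| * |x₂|) * |x₃| ^ 3
            = |x₁| * |x₂| * |x₃| * (x₁ ^ 2 + x₂ ^ 2 + |x₃| ^ 2) by ring, sq_abs]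

lemma interp_helper {t α : ℝ} (hα0 : 0 ≤ α) (hα1 : α ≤ 1) :
    (1 + |t|) ^ α ≤ 2 * (1 + |t| ^ α) := by
  have h1 : (1 + |t|) ≤ 2 * max 1 |t| := by
    have := le_max_left (1:ℝ) |t|
    have := le_max_right (1:ℝ) |t|
    linarith
  have h2 : (1 + |t|) ^ α ≤ (2 * max 1 |t|) ^ α :=
    Real.rpow_le_rpow (by positivity) h1 hα0
  have h3 : (2 * max 1 |t|) ^ α = 2 ^ α * (max 1 |t|) ^ α :=
    Real.mul_rpow (by norm_num) (le_max_of_le_left zero_le_one)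
  have h4 : (2:ℝ) ^ α ≤ 2 := by
    calc (2:ℝ) ^ α ≤ (2:ℝ) ^ (1:ℝ) :=
          Real.rpow_le_rpow_of_exponent_le (by norm_num) hα1
      _ = 2 := Real.rpow_one 2
  have h5 : (max 1 |t|) ^ α ≤ 1 + |t| ^ α := by
    rcases le_total (|t|) 1 with hle | hle
    · rw [max_eq_left hle, Real.one_rpow]
      have : 0 ≤ |t| ^ α := Real.rpow_nonneg (abs_nonneg t) α
      linarith
    · rw [max_eq_right hle]
      have : (0:ℝ) ≤ 1 := zero_le_one
      have h6 : (0:ℝ) ≤ |t| ^ α := Real.rpow_nonneg (abs_nonneg t) α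
      linarith
  calc (1 + |t|) ^ α ≤ 2 ^ α * (max 1 |t|) ^ α := h2.trans_eq h3
    _ ≤ 2 * (1 + |t| ^ α) := by
        apply mul_le_mul h4 h5 (Real.rpow_nonneg (le_max_of_le_left zero_le_one) α) (by norm_num)


lemma est1_help {h a b c m : ℝ} (h0 : 0 ≤ h) (ha0 : 0 ≤ a) (hb0 : 0 ≤ b) (hc0 : 0 ≤ c)
    (ham : a ≤ m) (hbm : b ≤ m) (hcm : c ≤ m) :
    (b * c) * (4 * (h * a / 4) ^ 4) +
      a ^ 2 * ((h * b / 4) * (h * c / 4) * ((h * b / 4) ^ 2 + (h * c / 4) ^ 2))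
      ≤ (6 / 256) * h ^ 4 * a ^ 2 * (b * c) * m ^ 2 := by
  have H : (0:ℝ) ≤ h ^ 4 * a ^ 2 * (b * c) :=
    mul_nonneg (mul_nonneg (pow_nonneg h0 4) (sq_nonneg a)) (mul_nonneg hb0 hc0)
  have ha2 : a ^ 2 ≤ m ^ 2 := pow_le_pow_left₀ ha0 ham 2
  have hb2 : b ^ 2 ≤ m ^ 2 := pow_le_pow_left₀ hb0 hbm 2
  have hc2 : c ^ 2 ≤ m ^ 2 := pow_le_pow_left₀ hc0 hcm 2
  nlinarith [mul_le_mul_of_nonneg_left ha2 H, mul_le_mul_of_nonneg_left hb2 H,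
    mul_le_mul_of_nonneg_left hc2 H]

lemma est1_final {h a b c m : ℝ} (h0 : 0 < h) (ha : 1 ≤ a) (hb : 1 ≤ b) (hc : 1 ≤ c)
    (ham : a ≤ m) (hm4 : h * m ≤ 4) :
    8 * ((6 / 256) * h ^ 4 * a ^ 2 * (b * c) * m ^ 2) / (h ^ 2 * a ^ 2 * b ^ 2 * c ^ 2 / 64)
      ≤ 48 * (h * (a * m)) := by
  have ha0 : (0:ℝ) < a := lt_of_lt_of_le one_pos ha
  have hb0 : (0:ℝ) < b := lt_of_lt_of_le one_pos hb
  have hc0 : (0:ℝ) < c := lt_of_lt_of_le one_pos hc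
  have hm0 : (0:ℝ) < m := lt_of_lt_of_le ha0 ham
  have hden : (0:ℝ) < h ^ 2 * a ^ 2 * b ^ 2 * c ^ 2 / 64 :=
    div_pos (mul_pos (mul_pos (mul_pos (pow_pos h0 2) (pow_pos ha0 2)) (pow_pos hb0 2))
      (pow_pos hc0 2)) (by norm_num)
  rw [div_le_iff₀ hden]
  have hbase : (0:ℝ) ≤ (3 / 4) * h ^ 3 * a ^ 2 * (b * c) * m := by
    have : (0:ℝ) < (3 / 4) * h ^ 3 * a ^ 2 * (b * c) * m :=
      mul_pos (mul_pos (mul_pos (mul_pos (by norm_num) (pow_pos h0 3)) (pow_pos ha0 2))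
        (mul_pos hb0 hc0)) hm0
    linarith
  have hbc1 : (1:ℝ) ≤ b * c := by
    calc (1:ℝ) = 1 * 1 := by norm_num
      _ ≤ b * c := mul_le_mul hb hc zero_le_one (by linarith)
  have habc : (1:ℝ) ≤ a * (b * c) := by
    calc (1:ℝ) = 1 * 1 := by norm_num
      _ ≤ a * (b * c) := mul_le_mul ha hbc1 zero_le_one (by linarith)
  calc 8 * ((6 / 256) * h ^ 4 * a ^ 2 * (b * c) * m ^ 2)
      = ((3 / 4) * h ^ 3 * a ^ 2 * (b * c) * m) * (h * m / 4) := by ring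
    _ ≤ ((3 / 4) * h ^ 3 * a ^ 2 * (b * c) * m) * 1 :=
        mul_le_mul_of_nonneg_left (by linarith) hbase
    _ = ((3 / 4) * h ^ 3 * a ^ 2 * (b * c) * m) * 1 * 1 := by ring
    _ ≤ ((3 / 4) * h ^ 3 * a ^ 2 * (b * c) * m) * 1 * (a * (b * c)) := by
        apply mul_le_mul_of_nonneg_left habc
        linarith
    _ = 48 * (h * (a * m)) * (h ^ 2 * a ^ 2 * b ^ 2 * c ^ 2 / 64) := by ring

lemma est2_final {h a b c m : ℝ} (h0 : 0 < h) (ha0 : 0 ≤ a) (hb0 : 0 ≤ b) (hc0 : 0 ≤ c)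
    (ham : a ≤ m) (hbm : b ≤ m) (hcm : c ≤ m) (hm4 : h * m ≤ 4) :
    (8 / h ^ 3) * ((h * b / 4) * (h * c / 4) * (h * a / 4) *
      ((h * b / 4) ^ 2 + (h * c / 4) ^ 2 + (h * a / 4) ^ 2)) ≤ h * ((a * (b * c)) * m) := by
  have hm0 : (0:ℝ) ≤ m := ha0.trans ham
  have Hnn : (0:ℝ) ≤ h ^ 2 * (a * (b * c)) / 128 := by
    have : (0:ℝ) ≤ h ^ 2 * (a * (b * c)) :=
      mul_nonneg (pow_nonneg h0.le 2) (mul_nonneg ha0 (mul_nonneg hb0 hc0))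
    linarith
  have Hnn2 : (0:ℝ) ≤ h * ((a * (b * c)) * m) :=
    mul_nonneg h0.le (mul_nonneg (mul_nonneg ha0 (mul_nonneg hb0 hc0)) hm0)
  have hsq : b ^ 2 + c ^ 2 + a ^ 2 ≤ 3 * m ^ 2 := by
    have e1 := pow_le_pow_left₀ ha0 ham 2
    have e2 := pow_le_pow_left₀ hb0 hbm 2
    have e3 := pow_le_pow_left₀ hc0 hcm 2
    linarith
  calc (8 / h ^ 3) * ((h * b / 4) * (h * c / 4) * (h * a / 4) *
        ((h * b / 4) ^ 2 + (h * c / 4) ^ 2 + (h * a / 4) ^ 2))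
      = (h ^ 2 * (a * (b * c)) / 128) * (b ^ 2 + c ^ 2 + a ^ 2) := by
        field_simp
        ring
    _ ≤ (h ^ 2 * (a * (b * c)) / 128) * (3 * m ^ 2) := mul_le_mul_of_nonneg_left hsq Hnn
    _ = (h * ((a * (b * c)) * m)) * (3 * (h * m) / 128) := by ring
    _ ≤ (h * ((a * (b * c)) * m)) * 1 := by
        apply mul_le_mul_of_nonneg_left _ Hnn2
        linarith
    _ = h * ((a * (b * c)) * m) := mul_one _

lemma bound1_help {h T w : ℝ} (h0 : 0 ≤ h) (hT : 0 ≤ T) (hw : 0 ≤ w) :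
    48 * (h * w) + 32 * (h * (T * w)) ≤ 48 * (h * (1 + T) * w) := by
  nlinarith [mul_nonneg (mul_nonneg h0 hT) hw]

set_option maxHeartbeats 1000000 in
/-- bound for the multiplier `𝓜_{h,1}^{2,±}`. -/
theorem M2_one_bound :
    ∃ C : ℝ, 0 < C ∧ ∀ h : ℝ, 0 < h → h ≤ 1 → ∀ α : ℝ, 0 ≤ α → α ≤ 1 →
      ∀ t σ : ℝ, σ = 1 ∨ σ = -1 →
      ∀ k k₁ k₂ : ℤ, k = k₁ + k₂ → k * k₁ * k₂ ≠ 0 →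
        |(k : ℝ)| ≤ Real.pi / h → |(k₁ : ℝ)| ≤ Real.pi / h → |(k₂ : ℝ)| ≤ Real.pi / h →
        ‖(((k : ℝ) / Psi2 k k₁ k₂ : ℝ) : ℂ) * eI (σ * t * Psi2 k k₁ k₂) -
            ((8 * Real.sin (h * k / 2) ^ 3 / (h ^ 3 * (k : ℝ) ^ 2 * Phi2 h k k₁ k₂) : ℝ) : ℂ) *
              eI (σ * t * Phi2 h k k₁ k₂)‖
          ≤ C * (h ^ α * (1 + |t| ^ α) / |(k₁ : ℝ) * (k₂ : ℝ)|) *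
              (|(k : ℝ) * (k₁ : ℝ) * (k₂ : ℝ)| *
                max |(k : ℝ)| (max |(k₁ : ℝ)| |(k₂ : ℝ)|)) ^ α := by
  refine ⟨96, by norm_num, ?_⟩
  intro h h0 hh1 α hα0 hα1 t σ hσ k k₁ k₂ hsum hne hbk hbk1 hbk2
  have hπ4 : Real.pi ≤ 4 := Real.pi_le_four
  have hπ0 : 0 < Real.pi := Real.pi_pos
  have hkZ : k ≠ 0 := fun hh => hne (by simp [hh])
  have hk1Z : k₁ ≠ 0 := fun hh => hne (by simp [hh])
  have hk2Z : k₂ ≠ 0 := fun hh => hne (by simp [hh])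
  have hk0 : (k:ℝ) ≠ 0 := Int.cast_ne_zero.mpr hkZ
  have hk10 : (k₁:ℝ) ≠ 0 := Int.cast_ne_zero.mpr hk1Z
  have hk20 : (k₂:ℝ) ≠ 0 := Int.cast_ne_zero.mpr hk2Z
  have h1k : (1:ℝ) ≤ |(k:ℝ)| := by
    have := Int.one_le_abs hkZ
    calc (1:ℝ) = ((1:ℤ):ℝ) := by norm_num
      _ ≤ ((|k|:ℤ):ℝ) := by exact_mod_cast this
      _ = |(k:ℝ)| := by push_cast; ring
  have h1k1 : (1:ℝ) ≤ |(k₁:ℝ)| := by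
    have := Int.one_le_abs hk1Z
    calc (1:ℝ) = ((1:ℤ):ℝ) := by norm_num
      _ ≤ ((|k₁|:ℤ):ℝ) := by exact_mod_cast this
      _ = |(k₁:ℝ)| := by push_cast; ring
  have h1k2 : (1:ℝ) ≤ |(k₂:ℝ)| := by
    have := Int.one_le_abs hk2Z
    calc (1:ℝ) = ((1:ℤ):ℝ) := by norm_num
      _ ≤ ((|k₂|:ℤ):ℝ) := by exact_mod_cast this
      _ = |(k₂:ℝ)| := by push_cast; ring
  -- basic per-frequency sine facts
  have main : ∀ j : ℤ, (j:ℝ) ≠ 0 → |(j:ℝ)| ≤ Real.pi / h →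
      h * |(j:ℝ)| / 8 ≤ |Real.sin (h * (j:ℝ) / 4)| ∧
      Real.sin (h * (j:ℝ) / 4) ≠ 0 ∧
      |Real.sin (h * (j:ℝ) / 4) - h * (j:ℝ) / 4| ≤ |h * (j:ℝ) / 4| ^ 3 ∧
      |Real.sin (h * (j:ℝ) / 4)| ≤ |h * (j:ℝ) / 4| ∧
      |h * (j:ℝ) / 4| = h * |(j:ℝ)| / 4 := by
    intro j hj hbj
    have habs : |h * (j:ℝ) / 4| = h * |(j:ℝ)| / 4 := by
      rw [abs_div, abs_mul, abs_of_pos h0]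
      norm_num
    have hjp : h * |(j:ℝ)| ≤ Real.pi := by
      rw [le_div_iff₀ h0] at hbj
      linarith
    have h14 : |h * (j:ℝ) / 4| ≤ Real.pi / 4 := by rw [habs]; linarith
    have hle1 : |h * (j:ℝ) / 4| ≤ 1 := h14.trans (by linarith)
    have hle2 : |h * (j:ℝ) / 4| ≤ Real.pi / 2 := h14.trans (by linarith)
    have hlow := abs_sin_lower hle2
    rw [habs] at hlow
    have hjpos : 0 < |(j:ℝ)| := abs_pos.mpr hj
    refine ⟨by linarith, ?_, abs_sin_sub_le hle1, Real.abs_sin_le_abs, habs⟩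
    intro h0s
    rw [h0s, abs_zero] at hlow
    nlinarith
  obtain ⟨hls, hsne, hcs, hss, hxs⟩ := main k hk0 hbk
  obtain ⟨hls1, hs1ne, hcs1, hss1, hxs1⟩ := main k₁ hk10 hbk1
  obtain ⟨hls2, hs2ne, hcs2, hss2, hxs2⟩ := main k₂ hk20 hbk2
  clear main
  -- abbreviations
  set mk := max |(k:ℝ)| (max |(k₁:ℝ)| |(k₂:ℝ)|) with hmkdef
  set K := |(k₁:ℝ) * (k₂:ℝ)| with hKdef
  set P := Psi2 k k₁ k₂ with hP
  set Q := Phi2 h k k₁ k₂ with hQ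
  set A := (k:ℝ) / P with hA0
  set B := 8 * Real.sin (h * (k:ℝ) / 2) ^ 3 / (h ^ 3 * (k:ℝ) ^ 2 * Q) with hB0
  have hPdef : P = -(1/8 : ℝ) * (k:ℝ) * (k₁:ℝ) * (k₂:ℝ) := by rw [hP]; rfl
  have hQdef : Q = -(8 / h ^ 3) *
      (Real.sin (h * (k₁:ℝ) / 4) * Real.sin (h * (k₂:ℝ) / 4) * Real.sin (h * (k:ℝ) / 4)) := by
    rw [hQ]; rfl
  set s := Real.sin (h * (k:ℝ) / 4) with hsdef
  set s1 := Real.sin (h * (k₁:ℝ) / 4) with hs1def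
  set s2 := Real.sin (h * (k₂:ℝ) / 4) with hs2def
  set c := Real.cos (h * (k:ℝ) / 4) with hcdef
  -- numeric facts
  have hK : K = |(k₁:ℝ)| * |(k₂:ℝ)| := by rw [hKdef, abs_mul]
  have hK1 : (1:ℝ) ≤ K := by
    rw [hK]
    calc (1:ℝ) = 1 * 1 := by norm_num
      _ ≤ |(k₁:ℝ)| * |(k₂:ℝ)| :=
        mul_le_mul h1k1 h1k2 (by norm_num) (le_trans zero_le_one h1k1)
  have hKpos : (0:ℝ) < K := by linarith
  have hmk1 : (1:ℝ) ≤ mk := le_trans h1k (le_max_left _ _)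
  have hmkpos : (0:ℝ) < mk := by linarith
  have hkmk : |(k:ℝ)| ≤ mk := le_max_left _ _
  have hk1mk : |(k₁:ℝ)| ≤ mk := le_trans (le_max_left _ _) (le_max_right _ _)
  have hk2mk : |(k₂:ℝ)| ≤ mk := le_trans (le_max_right _ _) (le_max_right _ _)
  have hmkpi : h * mk ≤ 4 := by
    have : mk ≤ Real.pi / h := max_le hbk (max_le hbk1 hbk2)
    rw [le_div_iff₀ h0] at this
    calc h * mk = mk * h := by ring
      _ ≤ Real.pi := this
      _ ≤ 4 := hπ4
  -- nonvanishing
  have hQne : Q ≠ 0 := by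
    rw [hQdef]
    exact mul_ne_zero (neg_ne_zero.mpr (by positivity))
      (mul_ne_zero (mul_ne_zero hs1ne hs2ne) hsne)
  have hPne : P ≠ 0 := by
    rw [hPdef]
    exact mul_ne_zero (mul_ne_zero (mul_ne_zero (by norm_num) hk0) hk10) hk20
  -- explicit formulas
  have hA : A = -8 / ((k₁:ℝ) * (k₂:ℝ)) := by
    rw [hA0, hPdef]
    field_simp
  have hsin2 : Real.sin (h * (k:ℝ) / 2) = 2 * s * c := by
    rw [hsdef, hcdef, ← Real.sin_two_mul]
    congr 1
    ring
  have hB : B = -(8 * s ^ 2 * c ^ 3) / ((k:ℝ) ^ 2 * (s1 * s2)) := by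
    rw [hB0, hQdef, hsin2]
    field_simp
    ring
  -- 1 - cos bound
  have hcos1 : |c| ≤ 1 := by rw [hcdef]; exact Real.abs_cos_le_one _
  have hcos2 : 1 - c ≤ (h * (k:ℝ) / 4) ^ 2 / 2 := by
    rw [hcdef]
    linarith [Real.one_sub_sq_div_two_le_cos (x := h * (k:ℝ) / 4)]
  -- |A| = 8 / K
  have hAabs : |A| = 8 / K := by
    rw [hA, abs_div, hKdef]
    norm_num
  -- |B| ≤ 32 / K
  have hBabs : |B| = 8 * s ^ 2 * |c| ^ 3 / ((k:ℝ) ^ 2 * (|s1| * |s2|)) := by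
    rw [hB, abs_div, abs_neg]
    congr 1
    · rw [abs_mul, abs_mul, abs_pow, abs_pow, abs_of_nonneg (by norm_num : (0:ℝ) ≤ 8),
        sq_abs]
    · rw [abs_mul, abs_mul, abs_pow, sq_abs]
  have hBle : |B| ≤ 32 / K := by
    rw [hBabs]
    have hnum : 8 * s ^ 2 * |c| ^ 3 ≤ 8 * (h * |(k:ℝ)| / 4) ^ 2 := by
      have hs2 : s ^ 2 ≤ (h * |(k:ℝ)| / 4) ^ 2 := by
        have hax : |s| ≤ h * |(k:ℝ)| / 4 := hss.trans_eq hxs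
        calc s ^ 2 = |s| ^ 2 := (sq_abs s).symm
          _ ≤ (h * |(k:ℝ)| / 4) ^ 2 := pow_le_pow_left₀ (abs_nonneg s) hax 2
      have hc3 : |c| ^ 3 ≤ 1 := pow_le_one₀ (abs_nonneg c) hcos1
      calc 8 * s ^ 2 * |c| ^ 3 ≤ 8 * s ^ 2 * 1 := by
            apply mul_le_mul_of_nonneg_left hc3
            positivity
        _ = 8 * s ^ 2 := mul_one _
        _ ≤ 8 * (h * |(k:ℝ)| / 4) ^ 2 := by linarith
    have hden : (k:ℝ) ^ 2 * ((h * |(k₁:ℝ)| / 8) * (h * |(k₂:ℝ)| / 8)) ≤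
        (k:ℝ) ^ 2 * (|s1| * |s2|) := by
      gcongr
    have hdenpos : (0:ℝ) < (k:ℝ) ^ 2 * ((h * |(k₁:ℝ)| / 8) * (h * |(k₂:ℝ)| / 8)) := by
      have : (0:ℝ) < (k:ℝ) ^ 2 := by positivity
      have h1p : (0:ℝ) < h * |(k₁:ℝ)| / 8 := by positivity
      have h2p : (0:ℝ) < h * |(k₂:ℝ)| / 8 := by positivity
      positivity
    calc 8 * s ^ 2 * |c| ^ 3 / ((k:ℝ) ^ 2 * (|s1| * |s2|))
        ≤ 8 * (h * |(k:ℝ)| / 4) ^ 2 / ((k:ℝ) ^ 2 * ((h * |(k₁:ℝ)| / 8) * (h * |(k₂:ℝ)| / 8))) :=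
          div_le_div₀ (by positivity) hnum hdenpos hden
      _ = 32 / K := by
          rw [hK]
          rw [show (h * |(k:ℝ)| / 4) ^ 2 = h ^ 2 * |(k:ℝ)| ^ 2 / 16 by ring, sq_abs]
          field_simp
          ring
  -- |A - B| ≤ 48 * (h * (|k| * mk))
  have hksqpos : (0:ℝ) < (k:ℝ) ^ 2 := by
    rw [← sq_abs]
    exact pow_pos (lt_of_lt_of_le one_pos h1k) 2
  have hABeq : A - B = 8 * ((k₁:ℝ) * (k₂:ℝ) * (s ^ 2 * c ^ 3) - (k:ℝ) ^ 2 * (s1 * s2)) /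
      ((k:ℝ) ^ 2 * (k₁:ℝ) * (k₂:ℝ) * s1 * s2) := by
    rw [hA, hB]
    field_simp
    ring
  have hconv4 : (h * (k:ℝ) / 4) ^ 4 = (h * |(k:ℝ)| / 4) ^ 4 := by
    rw [← hxs, ← abs_pow, abs_of_nonneg (by positivity : (0:ℝ) ≤ (h * (k:ℝ) / 4) ^ 4)]
  have hconvk2 : (h * (k:ℝ) / 4) ^ 2 = (h * |(k:ℝ)| / 4) ^ 2 := by
    rw [← hxs, ← abs_pow, abs_of_nonneg (by positivity : (0:ℝ) ≤ (h * (k:ℝ) / 4) ^ 2)]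
  have hconv1 : (h * (k₁:ℝ) / 4) ^ 2 = (h * |(k₁:ℝ)| / 4) ^ 2 := by
    rw [← hxs1, ← abs_pow, abs_of_nonneg (by positivity : (0:ℝ) ≤ (h * (k₁:ℝ) / 4) ^ 2)]
  have hconv2 : (h * (k₂:ℝ) / 4) ^ 2 = (h * |(k₂:ℝ)| / 4) ^ 2 := by
    rw [← hxs2, ← abs_pow, abs_of_nonneg (by positivity : (0:ℝ) ≤ (h * (k₂:ℝ) / 4) ^ 2)]
  have hnumle : |(k₁:ℝ) * (k₂:ℝ) * (s ^ 2 * c ^ 3) - (k:ℝ) ^ 2 * (s1 * s2)| ≤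
      (6 / 256) * h ^ 4 * (k:ℝ) ^ 2 * K * mk ^ 2 := by
    have hsplit : (k₁:ℝ) * (k₂:ℝ) * (s ^ 2 * c ^ 3) - (k:ℝ) ^ 2 * (s1 * s2)
        = (k₁:ℝ) * (k₂:ℝ) * (s ^ 2 * c ^ 3 - (h * (k:ℝ) / 4) ^ 2)
          - (k:ℝ) ^ 2 * (s1 * s2 - (h * (k₁:ℝ) / 4) * (h * (k₂:ℝ) / 4)) := by ring
    have e1 : |s ^ 2 * c ^ 3 - (h * (k:ℝ) / 4) ^ 2| ≤ 4 * (h * (k:ℝ) / 4) ^ 4 :=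
      key1 hcs hss hcos1 hcos2
    have e2 : |s1 * s2 - (h * (k₁:ℝ) / 4) * (h * (k₂:ℝ) / 4)| ≤
        |h * (k₁:ℝ) / 4| * |h * (k₂:ℝ) / 4| *
          ((h * (k₁:ℝ) / 4) ^ 2 + (h * (k₂:ℝ) / 4) ^ 2) :=
      key2 hcs1 hcs2 hss1 hss2
    calc |(k₁:ℝ) * (k₂:ℝ) * (s ^ 2 * c ^ 3) - (k:ℝ) ^ 2 * (s1 * s2)|
        = |(k₁:ℝ) * (k₂:ℝ) * (s ^ 2 * c ^ 3 - (h * (k:ℝ) / 4) ^ 2)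
            - (k:ℝ) ^ 2 * (s1 * s2 - (h * (k₁:ℝ) / 4) * (h * (k₂:ℝ) / 4))| := by rw [hsplit]
      _ ≤ |(k₁:ℝ) * (k₂:ℝ) * (s ^ 2 * c ^ 3 - (h * (k:ℝ) / 4) ^ 2)|
            + |(k:ℝ) ^ 2 * (s1 * s2 - (h * (k₁:ℝ) / 4) * (h * (k₂:ℝ) / 4))| := abs_sub _ _
      _ = K * |s ^ 2 * c ^ 3 - (h * (k:ℝ) / 4) ^ 2|
            + (k:ℝ) ^ 2 * |s1 * s2 - (h * (k₁:ℝ) / 4) * (h * (k₂:ℝ) / 4)| := by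
          rw [abs_mul, abs_mul ((k:ℝ) ^ 2) _, abs_of_nonneg (sq_nonneg ((k:ℝ))), ← hKdef]
      _ ≤ K * (4 * (h * (k:ℝ) / 4) ^ 4)
            + (k:ℝ) ^ 2 * (|h * (k₁:ℝ) / 4| * |h * (k₂:ℝ) / 4| *
              ((h * (k₁:ℝ) / 4) ^ 2 + (h * (k₂:ℝ) / 4) ^ 2)) := by
          have hKnn : (0:ℝ) ≤ K := hKpos.le
          have hknn : (0:ℝ) ≤ (k:ℝ) ^ 2 := sq_nonneg _
          exact add_le_add (mul_le_mul_of_nonneg_left e1 hKnn)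
            (mul_le_mul_of_nonneg_left e2 hknn)
      _ = (|(k₁:ℝ)| * |(k₂:ℝ)|) * (4 * (h * |(k:ℝ)| / 4) ^ 4)
            + |(k:ℝ)| ^ 2 * ((h * |(k₁:ℝ)| / 4) * (h * |(k₂:ℝ)| / 4) *
              ((h * |(k₁:ℝ)| / 4) ^ 2 + (h * |(k₂:ℝ)| / 4) ^ 2)) := by
          rw [hK, hconv4, hconv1, hconv2, hxs1, hxs2, sq_abs]
      _ ≤ (6 / 256) * h ^ 4 * |(k:ℝ)| ^ 2 * (|(k₁:ℝ)| * |(k₂:ℝ)|) * mk ^ 2 :=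
          est1_help h0.le (abs_nonneg _) (abs_nonneg _) (abs_nonneg _) hkmk hk1mk hk2mk
      _ = (6 / 256) * h ^ 4 * (k:ℝ) ^ 2 * K * mk ^ 2 := by rw [sq_abs, hK]
  have hdenabs : |(k:ℝ) ^ 2 * (k₁:ℝ) * (k₂:ℝ) * s1 * s2|
      = (k:ℝ) ^ 2 * |(k₁:ℝ)| * |(k₂:ℝ)| * |s1| * |s2| := by
    rw [abs_mul, abs_mul, abs_mul, abs_mul, abs_of_nonneg (sq_nonneg ((k:ℝ)))]
  have hdenlb : h ^ 2 * (k:ℝ) ^ 2 * (k₁:ℝ) ^ 2 * (k₂:ℝ) ^ 2 / 64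
      ≤ |(k:ℝ) ^ 2 * (k₁:ℝ) * (k₂:ℝ) * s1 * s2| := by
    rw [hdenabs]
    calc h ^ 2 * (k:ℝ) ^ 2 * (k₁:ℝ) ^ 2 * (k₂:ℝ) ^ 2 / 64
        = (k:ℝ) ^ 2 * |(k₁:ℝ)| * |(k₂:ℝ)| * (h * |(k₁:ℝ)| / 8) * (h * |(k₂:ℝ)| / 8) := by
          rw [← sq_abs ((k₁:ℝ)), ← sq_abs ((k₂:ℝ))]
          ring
      _ ≤ (k:ℝ) ^ 2 * |(k₁:ℝ)| * |(k₂:ℝ)| * |s1| * |s2| := by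
          have hb1 : (0:ℝ) ≤ (k:ℝ) ^ 2 * |(k₁:ℝ)| * |(k₂:ℝ)| :=
            mul_nonneg (mul_nonneg (sq_nonneg _) (abs_nonneg _)) (abs_nonneg _)
          have s1nn : (0:ℝ) ≤ h * |(k₁:ℝ)| / 8 := by positivity
          have s2nn : (0:ℝ) ≤ h * |(k₂:ℝ)| / 8 := by positivity
          calc (k:ℝ) ^ 2 * |(k₁:ℝ)| * |(k₂:ℝ)| * (h * |(k₁:ℝ)| / 8) * (h * |(k₂:ℝ)| / 8)
              ≤ (k:ℝ) ^ 2 * |(k₁:ℝ)| * |(k₂:ℝ)| * |s1| * (h * |(k₂:ℝ)| / 8) := by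
                apply mul_le_mul_of_nonneg_right _ s2nn
                exact mul_le_mul_of_nonneg_left hls1 hb1
            _ ≤ (k:ℝ) ^ 2 * |(k₁:ℝ)| * |(k₂:ℝ)| * |s1| * |s2| := by
                apply mul_le_mul_of_nonneg_left hls2
                exact mul_nonneg hb1 (abs_nonneg _)
  have hdenlbpos : (0:ℝ) < h ^ 2 * (k:ℝ) ^ 2 * (k₁:ℝ) ^ 2 * (k₂:ℝ) ^ 2 / 64 := by
    have p1 : (0:ℝ) < (k₁:ℝ) ^ 2 := by
      rw [← sq_abs]; exact pow_pos (lt_of_lt_of_le one_pos h1k1) 2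
    have p2 : (0:ℝ) < (k₂:ℝ) ^ 2 := by
      rw [← sq_abs]; exact pow_pos (lt_of_lt_of_le one_pos h1k2) 2
    have := pow_pos h0 2
    exact div_pos (mul_pos (mul_pos (mul_pos (pow_pos h0 2) hksqpos) p1) p2) (by norm_num)
  have hABle : |A - B| ≤ 48 * (h * (|(k:ℝ)| * mk)) := by
    rw [hABeq, abs_div, abs_mul, abs_of_nonneg (by norm_num : (0:ℝ) ≤ 8)]
    calc 8 * |(k₁:ℝ) * (k₂:ℝ) * (s ^ 2 * c ^ 3) - (k:ℝ) ^ 2 * (s1 * s2)| /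
          |(k:ℝ) ^ 2 * (k₁:ℝ) * (k₂:ℝ) * s1 * s2|
        ≤ 8 * ((6 / 256) * h ^ 4 * (k:ℝ) ^ 2 * K * mk ^ 2) /
            (h ^ 2 * (k:ℝ) ^ 2 * (k₁:ℝ) ^ 2 * (k₂:ℝ) ^ 2 / 64) := by
          apply div_le_div₀ (by positivity) _ hdenlbpos hdenlb
          have : (0:ℝ) ≤ 8 := by norm_num
          exact mul_le_mul_of_nonneg_left hnumle this
      _ = 8 * ((6 / 256) * h ^ 4 * |(k:ℝ)| ^ 2 * (|(k₁:ℝ)| * |(k₂:ℝ)|) * mk ^ 2) /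
            (h ^ 2 * |(k:ℝ)| ^ 2 * |(k₁:ℝ)| ^ 2 * |(k₂:ℝ)| ^ 2 / 64) := by
          rw [sq_abs, sq_abs, sq_abs, hK]
      _ ≤ 48 * (h * (|(k:ℝ)| * mk)) :=
          est1_final h0 h1k h1k1 h1k2 hkmk hmkpi
  -- |P - Q| ≤ h * ((|k| * K) * mk)
  have hPQle : |P - Q| ≤ h * ((|(k:ℝ)| * K) * mk) := by
    have hPQ : P - Q = (8 / h ^ 3) *
        (s1 * s2 * s - (h * (k₁:ℝ) / 4) * (h * (k₂:ℝ) / 4) * (h * (k:ℝ) / 4)) := by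
      rw [hPdef, hQdef]
      field_simp
      ring
    have e3 := key3 hcs1 hcs2 hcs hss1 hss2 hss
    rw [hPQ, abs_mul, abs_of_nonneg (by positivity : (0:ℝ) ≤ 8 / h ^ 3)]
    calc (8 / h ^ 3) * |s1 * s2 * s - (h * (k₁:ℝ) / 4) * (h * (k₂:ℝ) / 4) * (h * (k:ℝ) / 4)|
        ≤ (8 / h ^ 3) * (|h * (k₁:ℝ) / 4| * |h * (k₂:ℝ) / 4| * |h * (k:ℝ) / 4| *
            ((h * (k₁:ℝ) / 4) ^ 2 + (h * (k₂:ℝ) / 4) ^ 2 + (h * (k:ℝ) / 4) ^ 2)) :=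
          mul_le_mul_of_nonneg_left e3 (by positivity)
      _ = (8 / h ^ 3) * ((h * |(k₁:ℝ)| / 4) * (h * |(k₂:ℝ)| / 4) * (h * |(k:ℝ)| / 4) *
            ((h * |(k₁:ℝ)| / 4) ^ 2 + (h * |(k₂:ℝ)| / 4) ^ 2 + (h * |(k:ℝ)| / 4) ^ 2)) := by
          rw [hxs, hxs1, hxs2, hconv1, hconv2, hconvk2]
      _ ≤ h * ((|(k:ℝ)| * (|(k₁:ℝ)| * |(k₂:ℝ)|)) * mk) :=
          est2_final h0 (abs_nonneg _) (abs_nonneg _) (abs_nonneg _) hkmk hk1mk hk2mk hmkpi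
      _ = h * ((|(k:ℝ)| * K) * mk) := by rw [hK]
  -- norm decomposition
  have hsig : |σ| = 1 := by rcases hσ with rfl | rfl <;> norm_num
  have hphase : ‖eI (σ * t * P) - eI (σ * t * Q)‖ ≤ |t| * |P - Q| := by
    refine (norm_eI_sub _ _).trans ?_
    rw [show σ * t * P - σ * t * Q = σ * (t * (P - Q)) by ring, abs_mul, hsig, one_mul,
      abs_mul]
  have hnorm0 : ‖(A:ℂ) * eI (σ * t * P) - (B:ℂ) * eI (σ * t * Q)‖ ≤ 48 * (1 / K) := by
    calc ‖(A:ℂ) * eI (σ * t * P) - (B:ℂ) * eI (σ * t * Q)‖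
        ≤ ‖(A:ℂ) * eI (σ * t * P)‖ + ‖(B:ℂ) * eI (σ * t * Q)‖ := norm_sub_le _ _
      _ = |A| + |B| := by
          rw [norm_mul, norm_mul, norm_eI, norm_eI, mul_one, mul_one, Complex.norm_real,
            Complex.norm_real, Real.norm_eq_abs, Real.norm_eq_abs]
      _ ≤ 8 / K + 32 / K := by
          rw [hAabs]
          exact add_le_add le_rfl hBle
      _ = 40 * (1 / K) := by ring
      _ ≤ 48 * (1 / K) := by
          apply mul_le_mul_of_nonneg_right (by norm_num)
          positivity
  have hnorm1 : ‖(A:ℂ) * eI (σ * t * P) - (B:ℂ) * eI (σ * t * Q)‖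
      ≤ 48 * (h * (1 + |t|) * (|(k:ℝ)| * mk)) := by
    have hdec : (A:ℂ) * eI (σ * t * P) - (B:ℂ) * eI (σ * t * Q)
        = ((A - B : ℝ) : ℂ) * eI (σ * t * P) + (B:ℂ) * (eI (σ * t * P) - eI (σ * t * Q)) := by
      push_cast
      ring
    calc ‖(A:ℂ) * eI (σ * t * P) - (B:ℂ) * eI (σ * t * Q)‖
        = ‖((A - B : ℝ) : ℂ) * eI (σ * t * P) + (B:ℂ) * (eI (σ * t * P) - eI (σ * t * Q))‖ := by
          rw [hdec]
      _ ≤ ‖((A - B : ℝ) : ℂ) * eI (σ * t * P)‖ + ‖(B:ℂ) * (eI (σ * t * P) - eI (σ * t * Q))‖ :=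
          norm_add_le _ _
      _ = |A - B| + |B| * ‖eI (σ * t * P) - eI (σ * t * Q)‖ := by
          rw [norm_mul, norm_mul, norm_eI, mul_one, Complex.norm_real, Complex.norm_real,
            Real.norm_eq_abs, Real.norm_eq_abs]
      _ ≤ 48 * (h * (|(k:ℝ)| * mk)) + (32 / K) * (|t| * (h * ((|(k:ℝ)| * K) * mk))) := by
          apply add_le_add hABle
          apply mul_le_mul hBle _ (norm_nonneg _) (by positivity)
          calc ‖eI (σ * t * P) - eI (σ * t * Q)‖ ≤ |t| * |P - Q| := hphase
            _ ≤ |t| * (h * ((|(k:ℝ)| * K) * mk)) :=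
                mul_le_mul_of_nonneg_left hPQle (abs_nonneg t)
      _ = 48 * (h * (|(k:ℝ)| * mk)) + 32 * (h * (|t| * (|(k:ℝ)| * mk))) := by
          field_simp
      _ ≤ 48 * (h * (1 + |t|) * (|(k:ℝ)| * mk)) :=
          bound1_help h0.le (abs_nonneg t)
            (mul_nonneg (abs_nonneg _) (le_trans zero_le_one hmk1))
  -- interpolation
  set X1 := h * (1 + |t|) * (|(k:ℝ)| * mk) with hX1def
  have hX1pos : 0 < X1 := by
    rw [hX1def]
    have h1t : (0:ℝ) < 1 + |t| := by
      have := abs_nonneg t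
      linarith
    exact mul_pos (mul_pos h0 h1t)
      (mul_pos (lt_of_lt_of_le one_pos h1k) hmkpos)
  have hX0pos : (0:ℝ) < 1 / K := by positivity
  have hinterp : ‖(A:ℂ) * eI (σ * t * P) - (B:ℂ) * eI (σ * t * Q)‖
      ≤ 48 * ((1 / K) ^ (1 - α) * X1 ^ α) := by
    rcases le_total (1 / K) X1 with hle | hle
    · calc ‖(A:ℂ) * eI (σ * t * P) - (B:ℂ) * eI (σ * t * Q)‖ ≤ 48 * (1 / K) := hnorm0
        _ = 48 * ((1 / K) ^ (1 - α) * (1 / K) ^ α) := by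
            rw [← Real.rpow_add hX0pos, show (1 - α) + α = 1 by ring, Real.rpow_one]
        _ ≤ 48 * ((1 / K) ^ (1 - α) * X1 ^ α) := by
            apply mul_le_mul_of_nonneg_left _ (by norm_num : (0:ℝ) ≤ 48)
            exact mul_le_mul_of_nonneg_left (Real.rpow_le_rpow hX0pos.le hle hα0)
              (Real.rpow_nonneg hX0pos.le _)
    · calc ‖(A:ℂ) * eI (σ * t * P) - (B:ℂ) * eI (σ * t * Q)‖
          ≤ 48 * X1 := hnorm1
        _ = 48 * (X1 ^ (1 - α) * X1 ^ α) := by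
            rw [← Real.rpow_add hX1pos, show (1 - α) + α = 1 by ring, Real.rpow_one]
        _ ≤ 48 * ((1 / K) ^ (1 - α) * X1 ^ α) := by
            apply mul_le_mul_of_nonneg_left _ (by norm_num : (0:ℝ) ≤ 48)
            exact mul_le_mul_of_nonneg_right
              (Real.rpow_le_rpow hX1pos.le hle (by linarith)) (Real.rpow_nonneg hX1pos.le _)
  -- final assembly
  have hKexp : K ^ α * K ^ (1 - α) = K := by
    rw [← Real.rpow_add hKpos, show α + (1 - α) = 1 by ring, Real.rpow_one]
  have hKα : (1 / K) ^ (1 - α) = K ^ α / K := by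
    rw [Real.div_rpow (by norm_num) hKpos.le, Real.one_rpow,
      div_eq_div_iff (ne_of_gt (Real.rpow_pos_of_pos hKpos _)) (ne_of_gt hKpos), one_mul, hKexp]
  have h1tnn : (0:ℝ) ≤ 1 + |t| := by
    have := abs_nonneg t
    linarith
  have hX1α : X1 ^ α = h ^ α * ((1 + |t|) ^ α * (|(k:ℝ)| ^ α * mk ^ α)) := by
    rw [hX1def, Real.mul_rpow (mul_nonneg h0.le h1tnn)
        (mul_nonneg (abs_nonneg _) (le_trans zero_le_one hmk1)),
      Real.mul_rpow h0.le h1tnn,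
      Real.mul_rpow (abs_nonneg _) (le_trans zero_le_one hmk1)]
    ring
  have habs3 : |(k:ℝ) * (k₁:ℝ) * (k₂:ℝ)| = |(k:ℝ)| * K := by
    rw [hKdef, mul_assoc, abs_mul]
  rw [habs3]
  have htargetα : ((|(k:ℝ)| * K) * mk) ^ α = |(k:ℝ)| ^ α * (K ^ α * mk ^ α) := by
    rw [Real.mul_rpow (mul_nonneg (abs_nonneg _) hKpos.le) (le_trans zero_le_one hmk1),
      Real.mul_rpow (abs_nonneg _) hKpos.le]
    ring
  have hW : (0:ℝ) ≤ 48 * (h ^ α * (|(k:ℝ)| ^ α * (mk ^ α * (K ^ α / K)))) := by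
    have r1 : (0:ℝ) ≤ h ^ α := Real.rpow_nonneg h0.le α
    have r2 : (0:ℝ) ≤ |(k:ℝ)| ^ α := Real.rpow_nonneg (abs_nonneg _) α
    have r3 : (0:ℝ) ≤ mk ^ α := Real.rpow_nonneg (le_trans zero_le_one hmk1) α
    have r4 : (0:ℝ) ≤ K ^ α / K := div_nonneg (Real.rpow_nonneg hKpos.le α) hKpos.le
    have := mul_nonneg r1 (mul_nonneg r2 (mul_nonneg r3 r4))
    linarith
  calc ‖(A:ℂ) * eI (σ * t * P) - (B:ℂ) * eI (σ * t * Q)‖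
      ≤ 48 * ((1 / K) ^ (1 - α) * X1 ^ α) := hinterp
    _ = (1 + |t|) ^ α * (48 * (h ^ α * (|(k:ℝ)| ^ α * (mk ^ α * (K ^ α / K))))) := by
        rw [hKα, hX1α]
        ring
    _ ≤ (2 * (1 + |t| ^ α)) * (48 * (h ^ α * (|(k:ℝ)| ^ α * (mk ^ α * (K ^ α / K))))) :=
        mul_le_mul_of_nonneg_right (interp_helper hα0 hα1) hW
    _ = 96 * (h ^ α * (1 + |t| ^ α) / K) * ((|(k:ℝ)| * K) * mk) ^ α := by
        rw [htargetα]
        ring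

end FPU

end
end
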